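/- arXiv:1403.7712 — 4 statements merged into one kernel-verified Lean document; each statement's English description precedes it below -/
import Mathlib

section
/- Define Z : ℝ² → ℂ by Z(x₁,x₂) = e^{i x₁} + 2 e^{−i x₁/2} cos(√3 x₂ / 2), let T̄ ⊂ ℝ² be the closed triangle equal to the convex hull of the three points (0,0), (4π/3, 0), (2π/3, 2π/√3), and let ρ(u,v) = 27 + 8u³ − 24uv² − 18(u² + v²) − (u² + v²)². Then: (i) the restriction of Z to T̄ is injective; (ii) Z(T̄) = { u + iv ∈ ℂ : ρ(u,v) ≥ 0 } (the closed region bounded by the deltoid curve); (iii) Z(ℝ²) = Z(T̄). -/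
noncomputable section

/-- The map `Z(x₁,x₂) = e^{i x₁} + 2 e^{-i x₁/2} cos(√3 x₂ / 2)`. -/
def Zmap (x : ℝ × ℝ) : ℂ :=
  Complex.exp (Complex.I * (x.1 : ℂ)) +
    2 * Complex.exp (-Complex.I * (x.1 : ℂ) / 2) * ((Real.cos (Real.sqrt 3 * x.2 / 2) : ℝ) : ℂ)

/-- The quartic polynomial whose nonnegativity locus is the closed deltoid region. -/
def ρdel (u v : ℝ) : ℝ :=
  27 + 8 * u ^ 3 - 24 * u * v ^ 2 - 18 * (u ^ 2 + v ^ 2) - (u ^ 2 + v ^ 2) ^ 2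

/-- The closed triangle with vertices `(0,0)`, `(4π/3, 0)`, `(2π/3, 2π/√3)`. -/
def Tri : Set (ℝ × ℝ) :=
  convexHull ℝ {(0, 0), (4 * Real.pi / 3, 0), (2 * Real.pi / 3, 2 * Real.pi / Real.sqrt 3)}

open Real

def ee (t : ℝ) : ℂ := Complex.exp (Complex.I * (t : ℂ))

lemma sqrt3_pos : (0:ℝ) < Real.sqrt 3 := Real.sqrt_pos.mpr (by norm_num)

lemma sqrt3_sq : Real.sqrt 3 ^ 2 = 3 := Real.sq_sqrt (by norm_num)

lemma ee_eq_iff {a b : ℝ} : ee a = ee b ↔ ∃ n : ℤ, a = b + n * (2 * π) := by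
  rw [ee, ee, Complex.exp_eq_exp_iff_exists_int]
  constructor
  · rintro ⟨n, hn⟩
    refine ⟨n, ?_⟩
    have : (Complex.I) * (a : ℂ) = Complex.I * ((b : ℂ) + n * (2*π)) := by
      rw [hn]; push_cast; ring
    have h2 := mul_left_cancel₀ Complex.I_ne_zero this
    exact_mod_cast h2
  · rintro ⟨n, hn⟩
    exact ⟨n, by rw [hn]; push_cast; ring⟩

lemma ee_period (t : ℝ) (n : ℤ) : ee (t + n * (2*π)) = ee t := ee_eq_iff.mpr ⟨n, rfl⟩

lemma Zmap_eq (x : ℝ × ℝ) :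
    Zmap x = ee x.1 + ee ((-x.1 + Real.sqrt 3 * x.2)/2) + ee ((-x.1 - Real.sqrt 3 * x.2)/2) := by
  rw [Zmap, Complex.ofReal_cos, Complex.cos, ee, ee, ee]
  rw [show ((-x.1 + Real.sqrt 3 * x.2)/2 : ℝ) = (-x.1/2) + (Real.sqrt 3 * x.2/2) by ring,
      show ((-x.1 - Real.sqrt 3 * x.2)/2 : ℝ) = (-x.1/2) + (-(Real.sqrt 3 * x.2/2)) by ring]
  push_cast
  rw [show Complex.I * (-(x.1:ℂ)/2 + (Real.sqrt 3:ℂ) * (x.2:ℂ)/2)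
        = (-Complex.I * (x.1:ℂ)/2) + ((Real.sqrt 3:ℂ) * (x.2:ℂ)/2 * Complex.I) by ring,
      show Complex.I * (-(x.1:ℂ)/2 + -((Real.sqrt 3:ℂ) * (x.2:ℂ)/2))
        = (-Complex.I * (x.1:ℂ)/2) + (-((Real.sqrt 3:ℂ) * (x.2:ℂ)/2) * Complex.I) by ring]
  rw [Complex.exp_add, Complex.exp_add]
  ring_nf

lemma mem_Tri_iff (x : ℝ × ℝ) :
    x ∈ Tri ↔ 0 ≤ x.2 ∧ Real.sqrt 3 * x.2 ≤ 3 * x.1 ∧ Real.sqrt 3 * x.2 ≤ 4 * π - 3 * x.1 := by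
  have h3 := sqrt3_pos
  have hsq := sqrt3_sq
  have hπ := Real.pi_pos
  have hne : Real.sqrt 3 ≠ 0 := ne_of_gt h3
  have hπne : π ≠ 0 := ne_of_gt hπ
  have hv3 : Real.sqrt 3 * (2 * π / Real.sqrt 3) = 2 * π := by field_simp
  constructor
  · intro hx
    have : Tri ⊆ {p : ℝ × ℝ | 0 ≤ p.2 ∧ Real.sqrt 3 * p.2 ≤ 3 * p.1 ∧ Real.sqrt 3 * p.2 ≤ 4 * π - 3 * p.1} := by
      apply convexHull_min
      · rintro p (rfl | rfl | rfl)
        · refine ⟨le_refl _, ?_, ?_⟩ <;> simp <;> nlinarith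
        · refine ⟨le_refl _, ?_, ?_⟩ <;> simp <;> nlinarith
        · exact ⟨by positivity, by simp only []; rw [hv3]; nlinarith,
            by simp only []; rw [hv3]; nlinarith⟩
      · rintro p ⟨hp1, hp2, hp3⟩ q ⟨hq1, hq2, hq3⟩ a b ha hb hab
        refine ⟨?_, ?_, ?_⟩ <;>
          simp only [Set.mem_setOf_eq, Prod.fst_add, Prod.snd_add, Prod.smul_fst,
            Prod.smul_snd, smul_eq_mul] <;> nlinarith
    exact this hx
  · rintro ⟨h1, h2, h3'⟩
    set w1 : ℝ := (4*π - 3*x.1 - Real.sqrt 3 * x.2)/(4*π) with hw1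
    set w2 : ℝ := (3*x.1 - Real.sqrt 3 * x.2)/(4*π) with hw2
    set w3 : ℝ := (Real.sqrt 3 * x.2)/(2*π) with hw3
    have hsum : w1 + w2 + w3 = 1 := by
      rw [hw1, hw2, hw3]; field_simp; ring
    have key : x = w1 • ((0:ℝ),(0:ℝ)) + w2 • (4*π/3, (0:ℝ)) + w3 • (2*π/3, 2*π/Real.sqrt 3) := by
      apply Prod.ext
      · simp only [Prod.fst_add, Prod.smul_fst, smul_eq_mul, hw1, hw2, hw3]
        field_simp
        try ring
      · simp only [Prod.snd_add, Prod.smul_snd, smul_eq_mul, hw1, hw2, hw3]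
        field_simp
        try ring
    rw [key]
    have hc := convex_convexHull ℝ ({(0, 0), (4 * Real.pi / 3, 0), (2 * Real.pi / 3, 2 * Real.pi / Real.sqrt 3)} : Set (ℝ×ℝ))
    have hmem : ∀ i : Fin 3, (![((0:ℝ),(0:ℝ)), (4*π/3, 0), (2*π/3, 2*π/Real.sqrt 3)] i) ∈ Tri := by
      intro i; fin_cases i <;> apply subset_convexHull <;> simp [Set.mem_insert_iff]
    have := hc.sum_mem (t := (Finset.univ : Finset (Fin 3)))
      (w := ![w1, w2, w3]) (z := ![((0:ℝ),(0:ℝ)), (4*π/3, 0), (2*π/3, 2*π/Real.sqrt 3)])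
      (by intro i _; fin_cases i <;> simp only [Matrix.cons_val_zero, Matrix.cons_val_one,
            Matrix.head_cons, Matrix.cons_val_two, Matrix.tail_cons, hw1, hw2, hw3] <;>
            apply div_nonneg <;> nlinarith)
      (by rw [Fin.sum_univ_three]; simpa using hsum)
      (fun i _ => hmem i)
    rw [Fin.sum_univ_three] at this
    simpa [Tri] using this

lemma Zmap_angles (A B Γ : ℝ) (hsum : A + B + Γ = 0) :
    Zmap (A, (B - Γ)/Real.sqrt 3) = ee A + ee B + ee Γ := by
  have hne : Real.sqrt 3 ≠ 0 := ne_of_gt sqrt3_pos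
  rw [Zmap_eq]
  have e1 : ((-(A, (B - Γ)/Real.sqrt 3).1 + Real.sqrt 3 * (A, (B - Γ)/Real.sqrt 3).2)/2) = B := by
    simp only []; field_simp; linarith
  have e2 : ((-(A, (B - Γ)/Real.sqrt 3).1 - Real.sqrt 3 * (A, (B - Γ)/Real.sqrt 3).2)/2) = Γ := by
    simp only []; field_simp; linarith
  rw [e1, e2]

lemma mem_Tri_of (A B Γ : ℝ) (h1 : B ≤ A) (h2 : Γ ≤ B) (hsum : A + B + Γ = 0)
    (hsp : A - Γ ≤ 2*π) : (A, (B - Γ)/Real.sqrt 3) ∈ Tri := by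
  have h3 := sqrt3_pos
  have hne : Real.sqrt 3 ≠ 0 := ne_of_gt h3
  have hdiv : Real.sqrt 3 * ((B - Γ)/Real.sqrt 3) = B - Γ := by field_simp
  rw [mem_Tri_iff]
  refine ⟨div_nonneg (by linarith) (le_of_lt h3), ?_, ?_⟩ <;> simp only [] <;> rw [hdiv] <;> linarith

lemma sort3 (P : ℝ → Prop) (a b c : ℝ) (ha : P a) (hb : P b) (hc : P c) :
    ∃ s₁ s₂ s₃ : ℝ, s₂ ≤ s₁ ∧ s₃ ≤ s₂ ∧ s₁ + s₂ + s₃ = a + b + c ∧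
      ee s₁ + ee s₂ + ee s₃ = ee a + ee b + ee c ∧ P s₁ ∧ P s₂ ∧ P s₃ := by
  rcases le_total a b with h1 | h1 <;> rcases le_total b c with h2 | h2 <;>
    rcases le_total a c with h3 | h3
  · exact ⟨c, b, a, by linarith, by linarith, by ring, by ring, hc, hb, ha⟩
  · exact ⟨c, b, a, by linarith, by linarith, by ring, by ring, hc, hb, ha⟩
  · exact ⟨b, c, a, by linarith, by linarith, by ring, by ring, hb, hc, ha⟩
  · exact ⟨b, a, c, by linarith, by linarith, by ring, by ring, hb, ha, hc⟩
  · exact ⟨c, a, b, by linarith, by linarith, by ring, by ring, hc, ha, hb⟩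
  · exact ⟨a, c, b, by linarith, by linarith, by ring, by ring, ha, hc, hb⟩
  · exact ⟨a, c, b, by linarith, by linarith, by ring, by ring, ha, hc, hb⟩
  · exact ⟨a, b, c, by linarith, by linarith, by ring, by ring, ha, hb, hc⟩

lemma reduce_mod (t : ℝ) : ∃ m : ℝ, 0 ≤ m ∧ m < 2*π ∧ ee m = ee t ∧ ∃ k : ℤ, m = t - k*(2*π) := by
  have h2π : (0:ℝ) < 2*π := by positivity
  obtain ⟨k, hk⟩ : ∃ k : ℤ, (k:ℤ) = ⌊t/(2*π)⌋ := ⟨⌊t/(2*π)⌋, rfl⟩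
  have hge : 0 ≤ t - ⌊t/(2*π)⌋*(2*π) := Int.sub_floor_div_mul_nonneg t h2π
  have hlt : t - ⌊t/(2*π)⌋*(2*π) < 2*π := Int.sub_floor_div_mul_lt t h2π
  rw [← hk] at hge hlt
  refine ⟨t - k*(2*π), hge, hlt, ?_, ⟨k, rfl⟩⟩
  have := ee_period t (-k)
  rw [show t + ((-k : ℤ):ℝ)*(2*π) = t - k*(2*π) by push_cast; ring] at this
  exact this

set_option maxHeartbeats 1000000 in
lemma Zmap_reduce (x : ℝ × ℝ) : ∃ y ∈ Tri, Zmap y = Zmap x := by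
  have hπ := Real.pi_pos
  set α := x.1 with hα
  set β := (-x.1 + Real.sqrt 3 * x.2)/2 with hβ
  set γ := (-x.1 - Real.sqrt 3 * x.2)/2 with hγ
  have hsum : α + β + γ = 0 := by rw [hα, hβ, hγ]; ring
  have hZx : Zmap x = ee α + ee β + ee γ := Zmap_eq x
  obtain ⟨a, ha0, ha2, hea, ka, hka⟩ := reduce_mod α
  obtain ⟨b, hb0, hb2, heb, kb, hkb⟩ := reduce_mod β
  obtain ⟨c, hc0, hc2, hec, kc, hkc⟩ := reduce_mod γ
  obtain ⟨s₁, s₂, s₃, h21, h32, hsum3, hee3, ⟨hs10, hs12⟩, ⟨hs20, hs22⟩, ⟨hs30, hs32⟩⟩ :=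
    sort3 (fun t => 0 ≤ t ∧ t < 2*π) a b c ⟨ha0, ha2⟩ ⟨hb0, hb2⟩ ⟨hc0, hc2⟩
  obtain ⟨N, hN⟩ : ∃ N : ℤ, s₁ + s₂ + s₃ = N * (2*π) := by
    refine ⟨-(ka+kb+kc), ?_⟩
    rw [hsum3, hka, hkb, hkc]; push_cast; linarith [hsum]
  have hN0 : 0 ≤ N := by
    by_contra hn
    push_neg at hn
    have : (N:ℝ) ≤ -1 := by exact_mod_cast Int.le_sub_one_of_lt hn
    nlinarith
  have hN3 : N < 3 := by
    by_contra hn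
    push_neg at hn
    have : (3:ℝ) ≤ (N:ℝ) := by exact_mod_cast hn
    nlinarith
  have heesum : ee s₁ + ee s₂ + ee s₃ = Zmap x := by
    rw [hZx, hee3, hea, heb, hec]
  interval_cases N <;> push_cast at hN
  · -- all zero
    have h1 : s₁ = 0 := by linarith
    have h2 : s₂ = 0 := by linarith
    have h3 : s₃ = 0 := by linarith
    refine ⟨(0, (0-0)/Real.sqrt 3), mem_Tri_of 0 0 0 le_rfl le_rfl (by ring) (by linarith), ?_⟩
    rw [Zmap_angles 0 0 0 (by ring), ← heesum, h1, h2, h3]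
  · refine ⟨(s₂, (s₃ - (s₁ - 2*π))/Real.sqrt 3),
      mem_Tri_of s₂ s₃ (s₁-2*π) h32 (by linarith) (by linarith) (by linarith), ?_⟩
    rw [Zmap_angles s₂ s₃ (s₁-2*π) (by linarith), ← heesum]
    rw [show s₁ - 2*π = s₁ + (-1 : ℤ)*(2*π) by push_cast; ring, ee_period]
    ring
  · refine ⟨(s₃, ((s₁ - 2*π) - (s₂ - 2*π))/Real.sqrt 3),
      mem_Tri_of s₃ (s₁-2*π) (s₂-2*π) (by linarith) (by linarith) (by linarith) (by linarith), ?_⟩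
    rw [Zmap_angles s₃ (s₁-2*π) (s₂-2*π) (by linarith), ← heesum]
    rw [show s₁ - 2*π = s₁ + (-1 : ℤ)*(2*π) by push_cast; ring,
        show s₂ - 2*π = s₂ + (-1 : ℤ)*(2*π) by push_cast; ring, ee_period, ee_period]
    ring

lemma exp_I_real (t : ℝ) :
    Complex.exp (Complex.I * (t:ℂ)) = ((Real.cos t : ℝ) : ℂ) + ((Real.sin t : ℝ) : ℂ) * Complex.I := by
  rw [mul_comm, Complex.exp_mul_I, Complex.ofReal_cos, Complex.ofReal_sin]

lemma Zmap_re (x : ℝ × ℝ) :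
    (Zmap x).re = Real.cos x.1 + 2 * Real.cos (x.1/2) * Real.cos (Real.sqrt 3 * x.2 / 2) ∧
    (Zmap x).im = Real.sin x.1 - 2 * Real.sin (x.1/2) * Real.cos (Real.sqrt 3 * x.2 / 2) := by
  have h1 := exp_I_real x.1
  have h2 : Complex.exp (-Complex.I * (x.1 : ℂ) / 2)
      = ((Real.cos (x.1/2) : ℝ) : ℂ) - ((Real.sin (x.1/2) : ℝ) : ℂ) * Complex.I := by
    have := exp_I_real (-(x.1/2))
    rw [Real.cos_neg, Real.sin_neg] at this
    rw [show (-Complex.I * (x.1 : ℂ) / 2) = Complex.I * ((-(x.1/2) : ℝ) : ℂ) by push_cast; ring, this]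
    push_cast; ring
  rw [Zmap, h1, h2]
  constructor <;>
    simp only [Complex.add_re, Complex.add_im, Complex.mul_re, Complex.mul_im,
      Complex.sub_re, Complex.sub_im, Complex.ofReal_re, Complex.ofReal_im,
      Complex.I_re, Complex.I_im, Complex.re_ofNat, Complex.im_ofNat] <;> ring

lemma rho_Zmap_nonneg (x : ℝ × ℝ) : 0 ≤ ρdel (Zmap x).re (Zmap x).im := by
  obtain ⟨hre, him⟩ := Zmap_re x
  set p := Real.cos (x.1/2) with hp
  set q := Real.sin (x.1/2) with hq
  set r := Real.cos (Real.sqrt 3 * x.2 / 2) with hr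
  have hpq : q^2 + p^2 = 1 := Real.sin_sq_add_cos_sq _
  have hc2 : Real.cos x.1 = 2*p^2 - 1 := by
    rw [show x.1 = 2*(x.1/2) by ring, Real.cos_two_mul]
  have hs2 : Real.sin x.1 = 2*q*p := by
    rw [show x.1 = 2*(x.1/2) by ring, Real.sin_two_mul]; try ring
  have key : ρdel (Zmap x).re (Zmap x).im
      = 16*(1 - r^2)*(r + 3*p - 4*p^3)^2 := by
    rw [hre, him, hc2, hs2, ρdel]
    linear_combination (-16*q^2*p^4 + 64*q^2*p^3*r - 96*q^2*p^2*r^2 + 64*q^2*p*r^3 - 16*q^2*r^4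
      - 16*p^6 - 64*p^5*r + 160*p^4*r^2 - 176*p^4 - 64*p^3*r^3 + 224*p^3*r - 16*p^2*r^4
      + 64*p^2*r^2 + 16*p^2 - 96*p*r^3 - 32*p*r - 16*r^4 + 16*r^2) * (congrArg (· - 1) hpq)
  rw [key]
  have hr1 : r^2 ≤ 1 := by
    rw [hr]; nlinarith [Real.neg_one_le_cos (Real.sqrt 3 * x.2 / 2), Real.cos_le_one (Real.sqrt 3 * x.2 / 2)]
  nlinarith [sq_nonneg (r + 3*p - 4*p^3), sq_nonneg r]

set_option maxHeartbeats 2000000 in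
lemma Zmap_surj (c : ℂ) (h : 0 ≤ ρdel c.re c.im) : ∃ x : ℝ × ℝ, Zmap x = c := by
  set u := c.re with hu
  set v := c.im with hv
  -- IVT to find a root of f
  set f : ℝ → ℝ := fun φ => Real.sin (3*(φ/2)) - u * Real.sin (φ/2) - v * Real.cos (φ/2) with hf
  have hcont : Continuous f := by
    rw [hf]; fun_prop
  have hf0 : f 0 = -v := by simp [hf]
  have hf2π : f (2*π) = v := by
    rw [hf]; simp only []
    rw [show (2*π/2 : ℝ) = π by ring, Real.sin_three_mul, Real.sin_pi, Real.cos_pi]; ring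
  have hzero : ∃ φ₀, f φ₀ = 0 := by
    rcases le_total 0 v with hv0 | hv0
    · have h0 : (0:ℝ) ∈ Set.Icc (f 0) (f (2*π)) := by rw [hf0, hf2π]; constructor <;> linarith
      have := intermediate_value_Icc (by positivity : (0:ℝ) ≤ 2*π) hcont.continuousOn h0
      obtain ⟨φ₀, _, hφ₀⟩ := this
      exact ⟨φ₀, hφ₀⟩
    · have h0 : (0:ℝ) ∈ Set.Icc (f (2*π)) (f 0) := by rw [hf0, hf2π]; constructor <;> linarith
      have := intermediate_value_Icc' (by positivity : (0:ℝ) ≤ 2*π) hcont.continuousOn h0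
      obtain ⟨φ₀, _, hφ₀⟩ := this
      exact ⟨φ₀, hφ₀⟩
  obtain ⟨φ₀, hφ₀⟩ := hzero
  set C := Real.cos (φ₀/2) with hC
  set S := Real.sin (φ₀/2) with hS
  have hCS : C^2 + S^2 = 1 := by rw [hC, hS]; exact Real.cos_sq_add_sin_sq _
  have hg1 : 3*S - 4*S^3 - u*S - v*C = 0 := by
    have : Real.sin (3*(φ₀/2)) - u * S - v * C = 0 := hφ₀
    rw [Real.sin_three_mul] at this
    rw [hS, hC] at *
    linarith [this]
  set K := 4*C^3 - 3*C with hK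
  set σ := u*C - v*S - K with hσ
  have hσe : σ = u*C - v*S - 4*C^3 + 3*C := by rw [hσ, hK]; ring
  have hid : ρdel u v = (2*K - σ)^2 * (4 - σ^2) := by
    rw [ρdel, hσe, hK]
    linear_combination
      (v^3*S^2*C + v^3*C + (-4)*v^2*S^5 + (-32)*v^2*S^3*C^2 + 3*v^2*S^3*u + 23*v^2*S^3 + (-1)*v^2*S*u + 3*v^2*S + 112*v*S^6*C + 40*v*S^4*C*u + (-8)*v*S^4*C + (-352)*v*S^2*C^5 + 96*v*S^2*C^3*u + 528*v*S^2*C^3 + (-3)*v*S^2*C*u^2 + (-54)*v*S^2*C*u + (-167)*v*S^2*C + 2*v*C*u^2 + 24*v*C*u + 18*v*C + (-448)*S^9 + (-272)*S^7*u + 368*S^7 + 1408*S^5*C^4 + (-384)*S^5*C^2*u + (-2112)*S^5*C^2 + (-28)*S^5*u^2 + 344*S^5*u + 644*S^5 + 352*S^3*C^4*u + (-1056)*S^3*C^4 + (-96)*S^3*C^2*u^2 + (-240)*S^3*C^2*u + 1584*S^3*C^2 + 3*S^3*u^3 + 37*S^3*u^2 + (-91)*S^3*u + (-573)*S^3 +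 (-1536)*S*C^8 + 704*S*C^6*u + 3456*S*C^6 + (-96)*S*C^4*u^2 + (-1056)*S*C^4*u + (-2592)*S*C^4 + 4*S*C^2*u^3 + 72*S*C^2*u^2 + 396*S*C^2*u + 744*S*C^2 + (-2)*S*u^3 + (-18)*S*u^2 + 46*S*u + (-18)*S) * hg1
      + (v^4*S^2 + v^4 + (-16)*v^2*S^6 + 8*v^2*S^4*u + 88*v^2*S^4 + 3*v^2*S^2*u^2 + 18*v^2*S^2*u + 31*v^2*S^2 + 2*v^2*u^2 + 24*v^2*u + 18*v^2 + (-1792)*S^10 + 1792*S^8*C^2 + (-1536)*S^8*u + 1024*S^8 + 3840*S^6*C^4 + (-7680)*S^6*C^2 + (-384)*S^6*u^2 + 1024*S^6*u + 2496*S^6 + (-3840)*S^4*C^6 + 2816*S^4*C^4*u + 3072*S^4*C^4 + (-384)*S^4*C^2*u^2 + (-2944)*S^4*C^2*u + 2496*S^4*C^2 + (-16)*S^4*u^3 + 192*S^4*u^2 + 272*S^4*u + (-1728)*S^4 + (-2304)*S^2*C^8 + 6912*S^2*C^6 + 352*S^2*C^4*u^2 + (-576)*S^2*C^4*u + (-6624)*S^2*C^4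 + (-64)*S^2*C^2*u^3 + (-240)*S^2*C^2*u^2 + 672*S^2*C^2*u + 2448*S^2*C^2 + 3*S^2*u^4 + 4*S^2*u^3 + (-82)*S^2*u^2 + 156*S^2*u + (-81)*S^2 + 2304*C^10 + (-1536)*C^8*u + (-4608)*C^8 + 352*C^6*u^2 + 1920*C^6*u + 3168*C^6 + (-32)*C^4*u^3 + (-176)*C^4*u^2 + (-672)*C^4*u + (-1296)*C^4 + C^2*u^4 + (-8)*C^2*u^3 + 22*C^2*u^2 + 72*C^2*u + 297*C^2 + u^4 + (-8)*u^3 + 18*u^2 + (-27)) * (congrArg (· - 1) hCS)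
  have hK1 : K^2 ≤ 1 := by
    have hidK : 1 - (4*C^3-3*C)^2 = S^2*(4*C^2-1)^2 + ((-16)*C^4 + 8*C^2 + (-1))*(C^2+S^2-1) := by
      ring
    rw [hK]
    nlinarith [sq_nonneg (S*(4*C^2-1)), hCS, hidK]
  have hσ4 : σ^2 ≤ 4 := by
    by_contra hc
    push_neg at hc
    have hE : 0 ≤ (2*K - σ)^2 * (4 - σ^2) := hid ▸ h
    have hE0 : (2*K - σ)^2 ≤ 0 := by nlinarith [sq_nonneg (2*K - σ)]
    have : 2*K - σ = 0 := by nlinarith [sq_nonneg (2*K - σ)]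
    nlinarith
  -- construct the point
  have hs3 : Real.sqrt 3 ≠ 0 := ne_of_gt (Real.sqrt_pos.mpr (by norm_num))
  refine ⟨(φ₀, 2 * Real.arccos (σ/2) / Real.sqrt 3), ?_⟩
  have harg : Real.sqrt 3 * (2 * Real.arccos (σ/2) / Real.sqrt 3) / 2 = Real.arccos (σ/2) := by
    field_simp
  have hcosψ : Real.cos (Real.arccos (σ/2)) = σ/2 :=
    Real.cos_arccos (by nlinarith) (by nlinarith)
  obtain ⟨hre, him⟩ := Zmap_re (φ₀, 2 * Real.arccos (σ/2) / Real.sqrt 3)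
  simp only [] at hre him
  rw [harg, hcosψ] at hre him
  have hc2 : Real.cos φ₀ = 2*C^2 - 1 := by
    rw [show φ₀ = 2*(φ₀/2) by ring, Real.cos_two_mul]
  have hs2 : Real.sin φ₀ = 2*S*C := by
    rw [show φ₀ = 2*(φ₀/2) by ring, Real.sin_two_mul]; try ring
  apply Complex.ext
  · rw [hre, hc2, hσe]
    linear_combination (S) * hg1 + (4*S^2 - 4*C^2 + u + 1) * (congrArg (· - 1) hCS)
  · rw [him, hs2, hσe]
    linear_combination (C) * hg1 + (v + 4*S*C) * (congrArg (· - 1) hCS)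

lemma ee_mul (s t : ℝ) : ee s * ee t = ee (s + t) := by
  rw [ee, ee, ee, ← Complex.exp_add]; push_cast; ring_nf

lemma ee_zero : ee 0 = 1 := by simp [ee]

lemma ee_ne_zero (t : ℝ) : ee t ≠ 0 := Complex.exp_ne_zero _

lemma ee_neg (t : ℝ) : ee (-t) = (starRingEnd ℂ) (ee t) := by
  rw [ee, ee, ← Complex.exp_conj]
  congr 1
  simp [Complex.ext_iff]

lemma e2_eq (a b c : ℝ) (h : a + b + c = 0) :
    ee a * ee b + ee a * ee c + ee b * ee c = (starRingEnd ℂ) (ee a + ee b + ee c) := by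
  rw [map_add, map_add, ← ee_neg, ← ee_neg, ← ee_neg, ee_mul, ee_mul, ee_mul,
    show a + b = -c by linarith, show a + c = -b by linarith, show b + c = -a by linarith]
  ring

lemma e3_eq (a b c : ℝ) (h : a + b + c = 0) : ee a * ee b * ee c = 1 := by
  rw [ee_mul, ee_mul, show a + b + c = 0 from h, ee_zero]

lemma kzero {k : ℤ} {t s : ℝ} (h : t = s + k * (2*π)) (h1 : -(2*π) < t - s)
    (h2 : t - s < 2*π) : t = s := by
  have hπ := Real.pi_pos
  have hk1 : (-1 : ℝ) < (k:ℝ) := by nlinarith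
  have hk2 : (k:ℝ) < 1 := by nlinarith
  have e1 : (-1:ℤ) < k := by exact_mod_cast hk1
  have e2 : k < 1 := by exact_mod_cast hk2
  have : k = 0 := by omega
  rw [this] at h; push_cast at h; linarith

lemma k01 {k : ℤ} {t s : ℝ} (h : t = s + k * (2*π)) (h1 : -(2*π) < t - s)
    (h2 : t - s < 4*π) : t = s ∨ t = s + 2*π := by
  have hπ := Real.pi_pos
  have hk1 : (-1 : ℝ) < (k:ℝ) := by nlinarith
  have hk2 : (k:ℝ) < 2 := by nlinarith
  have e1 : (-1:ℤ) < k := by exact_mod_cast hk1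
  have e2 : k < 2 := by exact_mod_cast hk2
  have : k = 0 ∨ k = 1 := by omega
  rcases this with rfl | rfl
  · left; push_cast at h; linarith
  · right; push_cast at h; linarith

lemma km10 {k : ℤ} {t s : ℝ} (h : t = s + k * (2*π)) (h1 : -(4*π) < t - s)
    (h2 : t - s < 2*π) : t = s ∨ t = s - 2*π := by
  have hπ := Real.pi_pos
  have hk1 : (-2 : ℝ) < (k:ℝ) := by nlinarith
  have hk2 : (k:ℝ) < 1 := by nlinarith
  have e1 : (-2:ℤ) < k := by exact_mod_cast hk1
  have e2 : k < 1 := by exact_mod_cast hk2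
  have : k = 0 ∨ k = -1 := by omega
  rcases this with rfl | rfl
  · left; push_cast at h; linarith
  · right; push_cast at h; linarith

set_option maxHeartbeats 1600000 in
lemma Zmap_injOn : Set.InjOn Zmap Tri := by
  intro x hx y hy hxy
  have hπ := Real.pi_pos
  have h3p := sqrt3_pos
  rw [mem_Tri_iff] at hx hy
  obtain ⟨hx1, hx2, hx3⟩ := hx
  obtain ⟨hy1, hy2, hy3⟩ := hy
  have hdx : 0 ≤ Real.sqrt 3 * x.2 := mul_nonneg h3p.le hx1
  have hdy : 0 ≤ Real.sqrt 3 * y.2 := mul_nonneg h3p.le hy1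
  set β := (-x.1 + Real.sqrt 3 * x.2)/2 with hβ
  set γ := (-x.1 - Real.sqrt 3 * x.2)/2 with hγ
  set β' := (-y.1 + Real.sqrt 3 * y.2)/2 with hβ'
  set γ' := (-y.1 - Real.sqrt 3 * y.2)/2 with hγ'
  have hsum : x.1 + β + γ = 0 := by rw [hβ, hγ]; ring
  have hsum' : y.1 + β' + γ' = 0 := by rw [hβ', hγ']; ring
  have finish : x.1 = y.1 → β - γ = β' - γ' → x = y := by
    intro h1 h2
    have h3 : Real.sqrt 3 * x.2 = Real.sqrt 3 * y.2 := by
      rw [hβ, hγ, hβ', hγ'] at h2; linarith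
    exact Prod.ext h1 (mul_left_cancel₀ (ne_of_gt h3p) h3)
  have hZ : ee x.1 + ee β + ee γ = ee y.1 + ee β' + ee γ' := by
    rw [hβ, hγ, hβ', hγ', ← Zmap_eq, ← Zmap_eq, hxy]
  have h2 : ee x.1 * ee β + ee x.1 * ee γ + ee β * ee γ
      = ee y.1 * ee β' + ee y.1 * ee γ' + ee β' * ee γ' := by
    rw [e2_eq _ _ _ hsum, e2_eq _ _ _ hsum', hZ]
  have h3 : ee x.1 * ee β * ee γ = ee y.1 * ee β' * ee γ' := by
    rw [e3_eq _ _ _ hsum, e3_eq _ _ _ hsum']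
  have hw1 : (ee y.1 - ee x.1) * (ee y.1 - ee β) * (ee y.1 - ee γ) = 0 := by
    linear_combination (-(ee y.1)^2) * hZ + (ee y.1) * h2 + (-1 : ℂ) * h3
  -- case analysis on which z matches w1
  rcases mul_eq_zero.mp hw1 with h12 | hc3
  rcases mul_eq_zero.mp h12 with hc1 | hc2
  -- Case 1 : ee y.1 = ee x.1
  · have hA : ee y.1 = ee x.1 := sub_eq_zero.mp hc1
    have hsum2 : ee β + ee γ = ee β' + ee γ' := by linear_combination hZ + hA
    have hprod2 : ee β * ee γ = ee β' * ee γ' :=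
      mul_left_cancel₀ (ee_ne_zero x.1) (by linear_combination h3 + (ee β' * ee γ') * hA)
    have hquad : (ee β' - ee β) * (ee β' - ee γ) = 0 := by
      linear_combination (-(ee β')) * hsum2 + hprod2
    obtain ⟨k, hk⟩ := ee_eq_iff.mp hA
    have hk0 : y.1 = x.1 := kzero hk (by linarith) (by linarith)
    rcases mul_eq_zero.mp hquad with hq1 | hq2
    · -- β' = β
      obtain ⟨l, hl⟩ := ee_eq_iff.mp (sub_eq_zero.mp hq1)
      have hl0 : β' = β := kzero hl (by linarith) (by linarith)
      exact finish (by linarith) (by linarith)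
    · -- β' = γ
      obtain ⟨l, hl⟩ := ee_eq_iff.mp (sub_eq_zero.mp hq2)
      rcases k01 hl (by linarith) (by linarith) with hl0 | hl0 <;>
        exact finish (by linarith) (by linarith)
  -- Case 2 : ee y.1 = ee β
  · have hA : ee y.1 = ee β := sub_eq_zero.mp hc2
    have hsum2 : ee x.1 + ee γ = ee β' + ee γ' := by linear_combination hZ + hA
    have hprod2 : ee x.1 * ee γ = ee β' * ee γ' :=
      mul_left_cancel₀ (ee_ne_zero β) (by linear_combination h3 + (ee β' * ee γ') * hA)
    have hquad : (ee β' - ee x.1) * (ee β' - ee γ) = 0 := by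
      linear_combination (-(ee β')) * hsum2 + hprod2
    obtain ⟨k, hk⟩ := ee_eq_iff.mp hA
    rcases k01 hk (by linarith) (by linarith) with hk0 | hk0 <;>
      rcases mul_eq_zero.mp hquad with hq1 | hq2
    · obtain ⟨l, hl⟩ := ee_eq_iff.mp (sub_eq_zero.mp hq1)
      rcases km10 hl (by linarith) (by linarith) with hl0 | hl0 <;>
        exact finish (by linarith) (by linarith)
    · obtain ⟨l, hl⟩ := ee_eq_iff.mp (sub_eq_zero.mp hq2)
      rcases k01 hl (by linarith) (by linarith) with hl0 | hl0 <;>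
        exact finish (by linarith) (by linarith)
    · obtain ⟨l, hl⟩ := ee_eq_iff.mp (sub_eq_zero.mp hq1)
      rcases km10 hl (by linarith) (by linarith) with hl0 | hl0 <;>
        exact finish (by linarith) (by linarith)
    · obtain ⟨l, hl⟩ := ee_eq_iff.mp (sub_eq_zero.mp hq2)
      rcases k01 hl (by linarith) (by linarith) with hl0 | hl0 <;>
        exact finish (by linarith) (by linarith)
  -- Case 3 : ee y.1 = ee γ
  · have hA : ee y.1 = ee γ := sub_eq_zero.mp hc3
    have hsum2 : ee x.1 + ee β = ee β' + ee γ' := by linear_combination hZ + hA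
    have hprod2 : ee x.1 * ee β = ee β' * ee γ' :=
      mul_left_cancel₀ (ee_ne_zero γ) (by linear_combination h3 + (ee β' * ee γ') * hA)
    have hquad : (ee β' - ee x.1) * (ee β' - ee β) = 0 := by
      linear_combination (-(ee β')) * hsum2 + hprod2
    obtain ⟨k, hk⟩ := ee_eq_iff.mp hA
    rcases k01 hk (by linarith) (by linarith) with hk0 | hk0 <;>
      rcases mul_eq_zero.mp hquad with hq1 | hq2
    · obtain ⟨l, hl⟩ := ee_eq_iff.mp (sub_eq_zero.mp hq1)
      rcases km10 hl (by linarith) (by linarith) with hl0 | hl0 <;>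
        exact finish (by linarith) (by linarith)
    · obtain ⟨l, hl⟩ := ee_eq_iff.mp (sub_eq_zero.mp hq2)
      have hl0 : β' = β := kzero hl (by linarith) (by linarith)
      exact finish (by linarith) (by linarith)
    · obtain ⟨l, hl⟩ := ee_eq_iff.mp (sub_eq_zero.mp hq1)
      rcases km10 hl (by linarith) (by linarith) with hl0 | hl0 <;>
        exact finish (by linarith) (by linarith)
    · obtain ⟨l, hl⟩ := ee_eq_iff.mp (sub_eq_zero.mp hq2)
      have hl0 : β' = β := kzero hl (by linarith) (by linarith)
      exact finish (by linarith) (by linarith)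


theorem stmt_2 :
    Set.InjOn Zmap Tri ∧
    Zmap '' Tri = {c : ℂ | 0 ≤ ρdel c.re c.im} ∧
    Zmap '' Set.univ = Zmap '' Tri := by
  refine ⟨Zmap_injOn, ?_, ?_⟩
  · ext c
    constructor
    · rintro ⟨x, _, rfl⟩
      exact rho_Zmap_nonneg x
    · intro hc
      obtain ⟨x, hxZ⟩ := Zmap_surj c hc
      obtain ⟨y, hyT, hyZ⟩ := Zmap_reduce x
      exact ⟨y, hyT, by rw [hyZ, hxZ]⟩
  · apply Set.eq_of_subset_of_subset
    · rintro c ⟨x, -, rfl⟩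
      obtain ⟨y, hyT, hyZ⟩ := Zmap_reduce x
      exact ⟨y, hyT, hyZ⟩
    · exact Set.image_mono (Set.subset_univ _)
end
end

section
/- Let λ ∈ ℝ and let f ∈ ℝ[Z,W] be a nonzero polynomial of total degree n such that L_λ f = −μ f for some real number μ. Then there exist natural numbers p, q with p + q = n and μ = (λ − 1)(p + q) + p² + q² + pq. -/
noncomputable section
open MvPolynomial Finsupp

lemma coeff_pderiv' {σ : Type*} [DecidableEq σ] (i : σ) (m : σ →₀ ℕ) (f : MvPolynomial σ ℝ) :
    coeff m (pderiv i f) = ((m i + 1 : ℕ) : ℝ) * coeff (m + Finsupp.single i 1) f := by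
  induction f using MvPolynomial.induction_on' with
  | monomial s a =>
    rw [pderiv_monomial, coeff_monomial, coeff_monomial]
    by_cases h : s = m + Finsupp.single i 1
    · subst h
      rw [if_pos (by rw [add_tsub_cancel_right])]
      simp [mul_comm]
    · rw [if_neg h, mul_zero]
      by_cases h0 : s i = 0
      · split <;> simp [h0]
      · rw [if_neg]
        intro he
        apply h
        rw [← he, tsub_add_cancel_of_le]
        rwa [Finsupp.single_le_iff, Nat.one_le_iff_ne_zero]
  | add p q hp hq => simp [hp, hq, mul_add]

/-- The deltoid operator `L_λ` on `ℝ[Z,W]`, with `Z = X 0` and `W = X 1`. -/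
def Lop (lam : ℝ) (f : MvPolynomial (Fin 2) ℝ) : MvPolynomial (Fin 2) ℝ :=
  (X 1 - (X 0) ^ 2) * pderiv 0 (pderiv 0 f)
    + (1 - X 0 * X 1) * pderiv 0 (pderiv 1 f)
    + (X 0 - (X 1) ^ 2) * pderiv 1 (pderiv 1 f)
    - C lam * X 0 * pderiv 0 f
    - C lam * X 1 * pderiv 1 f

theorem stmt_5 (lam : ℝ) (f : MvPolynomial (Fin 2) ℝ) (n : ℕ) (μ : ℝ)
    (hf : f ≠ 0) (hdeg : f.totalDegree = n)
    (heig : Lop lam f = -(C μ * f)) :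
    ∃ p q : ℕ, p + q = n ∧
      μ = (lam - 1) * ((p : ℝ) + q) + (p : ℝ) ^ 2 + (q : ℝ) ^ 2 + (p : ℝ) * q := by
  have hne : f.support.Nonempty := support_nonempty.mpr hf
  obtain ⟨d, hdmem, hdsum⟩ :=
    Finset.exists_mem_eq_sup f.support hne (fun s : Fin 2 →₀ ℕ => s.sum fun _ e => e)
  have hsum2 : ∀ e : Fin 2 →₀ ℕ, (e.sum fun _ k => k) = e 0 + e 1 := by
    intro e
    rw [Finsupp.sum_fintype _ _ (fun _ => rfl), Fin.sum_univ_two]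
  have hdn : d 0 + d 1 = n := by
    rw [← hsum2 d, ← hdsum, ← hdeg]
    rfl
  have hz : ∀ e : Fin 2 →₀ ℕ, d 0 + d 1 < e 0 + e 1 → coeff e f = 0 := by
    intro e he
    have h' : n < (e.sum fun _ k => k) := by rw [hsum2]; omega
    exact coeff_eq_zero_of_totalDegree_lt (hdeg ▸ h')
  have hc : coeff d f ≠ 0 := MvPolynomial.mem_support_iff.mp hdmem
  have h1 : coeff d (X 1 * pderiv 0 (pderiv 0 f)) = 0 := by
    rw [coeff_X_mul']
    split
    · next hmem =>
      rw [coeff_pderiv', coeff_pderiv', hz, mul_zero, mul_zero]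
      have hq1 : 1 ≤ d 1 := Nat.one_le_iff_ne_zero.mpr (Finsupp.mem_support_iff.mp hmem)
      simp only [Finsupp.add_apply, Finsupp.tsub_apply, Finsupp.single_apply]
      norm_num <;> omega
    · rfl
  have h3 : coeff d (pderiv 0 (pderiv 1 f)) = 0 := by
    rw [coeff_pderiv', coeff_pderiv', hz, mul_zero, mul_zero]
    simp only [Finsupp.add_apply, Finsupp.single_apply]
    norm_num <;> omega
  have h5 : coeff d (X 0 * pderiv 1 (pderiv 1 f)) = 0 := by
    rw [coeff_X_mul']
    split
    · next hmem =>
      rw [coeff_pderiv', coeff_pderiv', hz, mul_zero, mul_zero]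
      have hq1 : 1 ≤ d 0 := Nat.one_le_iff_ne_zero.mpr (Finsupp.mem_support_iff.mp hmem)
      simp only [Finsupp.add_apply, Finsupp.tsub_apply, Finsupp.single_apply]
      norm_num <;> omega
    · rfl
  have h7 : coeff d (X 0 * pderiv 0 f) = (d 0 : ℝ) * coeff d f := by
    rw [coeff_X_mul']
    split
    · next hmem =>
      have hp1 : 1 ≤ d 0 := Nat.one_le_iff_ne_zero.mpr (Finsupp.mem_support_iff.mp hmem)
      rw [coeff_pderiv']
      have he : d - Finsupp.single (0 : Fin 2) 1 + Finsupp.single (0 : Fin 2) 1 = d :=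
        tsub_add_cancel_of_le (by rwa [Finsupp.single_le_iff])
      rw [he]
      have hv : ((d - Finsupp.single (0 : Fin 2) 1 : Fin 2 →₀ ℕ)) 0 + 1 = d 0 := by
        simp only [Finsupp.tsub_apply, Finsupp.single_eq_same]
        omega
      rw [hv]
    · next hmem =>
      have h0 : d 0 = 0 := by simpa [Finsupp.mem_support_iff] using hmem
      rw [h0]; simp
  have h8 : coeff d (X 1 * pderiv 1 f) = (d 1 : ℝ) * coeff d f := by
    rw [coeff_X_mul']
    split
    · next hmem =>
      have hp1 : 1 ≤ d 1 := Nat.one_le_iff_ne_zero.mpr (Finsupp.mem_support_iff.mp hmem)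
      rw [coeff_pderiv']
      have he : d - Finsupp.single (1 : Fin 2) 1 + Finsupp.single (1 : Fin 2) 1 = d :=
        tsub_add_cancel_of_le (by rwa [Finsupp.single_le_iff])
      rw [he]
      have hv : ((d - Finsupp.single (1 : Fin 2) 1 : Fin 2 →₀ ℕ)) 1 + 1 = d 1 := by
        simp only [Finsupp.tsub_apply, Finsupp.single_eq_same]
        omega
      rw [hv]
    · next hmem =>
      have h0 : d 1 = 0 := by simpa [Finsupp.mem_support_iff] using hmem
      rw [h0]; simp
  have h2 : coeff d (X 0 ^ 2 * pderiv 0 (pderiv 0 f))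
      = (d 0 : ℝ) * ((d 0 : ℝ) - 1) * coeff d f := by
    rw [X_pow_eq_monomial, coeff_monomial_mul']
    split
    · next hle =>
      have hp2 : 2 ≤ d 0 := Finsupp.single_le_iff.mp hle
      rw [coeff_pderiv', coeff_pderiv']
      have he : d - Finsupp.single (0 : Fin 2) 2 + Finsupp.single (0 : Fin 2) 1 + Finsupp.single (0 : Fin 2) 1 = d := by
        ext j
        fin_cases j <;>
          simp only [Finsupp.add_apply, Finsupp.tsub_apply, Finsupp.single_apply] <;>
          norm_num <;> omega
      rw [he]
      have e0 : ((d - Finsupp.single (0 : Fin 2) 2 : Fin 2 →₀ ℕ)) 0 + 1 = d 0 - 1 := by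
        simp only [Finsupp.tsub_apply, Finsupp.single_eq_same]; omega
      have e1 : ((d - Finsupp.single (0 : Fin 2) 2 + Finsupp.single (0 : Fin 2) 1 : Fin 2 →₀ ℕ)) 0 + 1 = d 0 := by
        simp only [Finsupp.add_apply, Finsupp.tsub_apply, Finsupp.single_eq_same]; omega
      rw [e0, e1]
      have : ((d 0 - 1 : ℕ) : ℝ) = (d 0 : ℝ) - 1 := by
        push_cast [Nat.cast_sub (by omega : 1 ≤ d 0)]; ring
      rw [this]; ring
    · next hle =>
      have hp2 : d 0 < 2 := by
        by_contra h
        exact hle (Finsupp.single_le_iff.mpr (by omega))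
      have : d 0 = 0 ∨ d 0 = 1 := by omega
      rcases this with h | h <;> rw [h] <;> norm_num <;> omega
  have h6 : coeff d (X 1 ^ 2 * pderiv 1 (pderiv 1 f))
      = (d 1 : ℝ) * ((d 1 : ℝ) - 1) * coeff d f := by
    rw [X_pow_eq_monomial, coeff_monomial_mul']
    split
    · next hle =>
      have hp2 : 2 ≤ d 1 := Finsupp.single_le_iff.mp hle
      rw [coeff_pderiv', coeff_pderiv']
      have he : d - Finsupp.single (1 : Fin 2) 2 + Finsupp.single (1 : Fin 2) 1 + Finsupp.single (1 : Fin 2) 1 = d := by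
        ext j
        fin_cases j <;>
          simp only [Finsupp.add_apply, Finsupp.tsub_apply, Finsupp.single_apply] <;>
          norm_num <;> omega
      rw [he]
      have e0 : ((d - Finsupp.single (1 : Fin 2) 2 : Fin 2 →₀ ℕ)) 1 + 1 = d 1 - 1 := by
        simp only [Finsupp.tsub_apply, Finsupp.single_eq_same]; omega
      have e1 : ((d - Finsupp.single (1 : Fin 2) 2 + Finsupp.single (1 : Fin 2) 1 : Fin 2 →₀ ℕ)) 1 + 1 = d 1 := by
        simp only [Finsupp.add_apply, Finsupp.tsub_apply, Finsupp.single_eq_same]; omega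
      rw [e0, e1]
      have : ((d 1 - 1 : ℕ) : ℝ) = (d 1 : ℝ) - 1 := by
        push_cast [Nat.cast_sub (by omega : 1 ≤ d 1)]; ring
      rw [this]; ring
    · next hle =>
      have hp2 : d 1 < 2 := by
        by_contra h
        exact hle (Finsupp.single_le_iff.mpr (by omega))
      have : d 1 = 0 ∨ d 1 = 1 := by omega
      rcases this with h | h <;> rw [h] <;> norm_num <;> omega
  have h4 : coeff d (X 0 * X 1 * pderiv 0 (pderiv 1 f))
      = (d 0 : ℝ) * (d 1 : ℝ) * coeff d f := by
    rw [mul_assoc, coeff_X_mul']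
    split
    · next hmem =>
      have hp1 : 1 ≤ d 0 := Nat.one_le_iff_ne_zero.mpr (Finsupp.mem_support_iff.mp hmem)
      rw [coeff_X_mul']
      split
      · next hmem' =>
        have hq1 : 1 ≤ d 1 := by
          have := Finsupp.mem_support_iff.mp hmem'
          simp only [Finsupp.tsub_apply, Finsupp.single_apply] at this
          omega
        rw [coeff_pderiv', coeff_pderiv']
        have he : d - Finsupp.single (0 : Fin 2) 1 - Finsupp.single (1 : Fin 2) 1
            + Finsupp.single (0 : Fin 2) 1 + Finsupp.single (1 : Fin 2) 1 = d := by
          ext j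
          fin_cases j <;>
            simp only [Finsupp.add_apply, Finsupp.tsub_apply, Finsupp.single_apply] <;>
            norm_num <;> omega
        rw [he]
        have e0 : ((d - Finsupp.single (0 : Fin 2) 1 - Finsupp.single (1 : Fin 2) 1 : Fin 2 →₀ ℕ)) 0 + 1 = d 0 := by
          simp only [Finsupp.tsub_apply, Finsupp.single_apply]
          norm_num <;> omega
        have e1 : ((d - Finsupp.single (0 : Fin 2) 1 - Finsupp.single (1 : Fin 2) 1 + Finsupp.single (0 : Fin 2) 1 : Fin 2 →₀ ℕ)) 1 + 1
            = d 1 := by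
          simp only [Finsupp.add_apply, Finsupp.tsub_apply, Finsupp.single_apply]
          norm_num <;> omega
        rw [e0, e1]
        ring
      · next hmem' =>
        have hq0 : d 1 = 0 := by
          have := Finsupp.notMem_support_iff.mp hmem'
          simp only [Finsupp.tsub_apply, Finsupp.single_apply] at this
          simpa using this
        rw [hq0]; simp
    · next hmem =>
      have h0 : d 0 = 0 := by simpa [Finsupp.mem_support_iff] using hmem
      rw [h0]; simp
  have hA : coeff d ((X 1 - X 0 ^ 2) * pderiv 0 (pderiv 0 f))
      = -((d 0 : ℝ) * ((d 0 : ℝ) - 1) * coeff d f) := by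
    rw [sub_mul, coeff_sub, h1, h2]; ring
  have hB : coeff d ((1 - X 0 * X 1) * pderiv 0 (pderiv 1 f))
      = -((d 0 : ℝ) * (d 1 : ℝ) * coeff d f) := by
    rw [sub_mul, coeff_sub, one_mul, h3, h4]; ring
  have hC : coeff d ((X 0 - X 1 ^ 2) * pderiv 1 (pderiv 1 f))
      = -((d 1 : ℝ) * ((d 1 : ℝ) - 1) * coeff d f) := by
    rw [sub_mul, coeff_sub, h5, h6]; ring
  have hD : coeff d (C lam * X 0 * pderiv 0 f) = lam * ((d 0 : ℝ) * coeff d f) := by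
    rw [mul_assoc, coeff_C_mul, h7]
  have hE : coeff d (C lam * X 1 * pderiv 1 f) = lam * ((d 1 : ℝ) * coeff d f) := by
    rw [mul_assoc, coeff_C_mul, h8]
  have hkey := congrArg (coeff d) heig
  rw [show Lop lam f = (X 1 - X 0 ^ 2) * pderiv 0 (pderiv 0 f)
      + (1 - X 0 * X 1) * pderiv 0 (pderiv 1 f)
      + (X 0 - X 1 ^ 2) * pderiv 1 (pderiv 1 f)
      - C lam * X 0 * pderiv 0 f
      - C lam * X 1 * pderiv 1 f from rfl] at hkey
  rw [coeff_neg, coeff_C_mul, coeff_sub, coeff_sub, coeff_add, coeff_add,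
    hA, hB, hC, hD, hE] at hkey
  refine ⟨d 0, d 1, hdn, ?_⟩
  have hEq : μ * coeff d f
      = ((lam - 1) * ((d 0 : ℝ) + (d 1 : ℝ)) + (d 0 : ℝ) ^ 2 + (d 1 : ℝ) ^ 2
          + (d 0 : ℝ) * (d 1 : ℝ)) * coeff d f := by
    linear_combination hkey
  exact mul_right_cancel₀ hc hEq
end
end

section
/- Let (T_p)_{p∈ℤ} ⊆ ℝ[Z,W] be defined by T₀ = 3, T₁ = 3Z, T₂ = 9Z² − 6W and the two-sided recurrence T_{p+3} = 3Z·T_{p+2} − 3W·T_{p+1} + T_p for all p ∈ ℤ, and set Q_p = 3^{−|p|} T_p. Let L₁ be the deltoid operator with λ = 1. Then: (i) for all integers p, q ≥ 1, the polynomial R_{p,q} := Q_p Q_{−q} − 3^{−2·min(p,q)} Q_{p−q} satisfies L₁ R_{p,q} = −(p² + q² + pq) R_{p,q}, and R_{p,q} = Z^p W^q + terms of strictly smaller total degree; (ii) for all integers p ≥ q ≥ 0, L₁(Q_p Q_q − Q_{p+q}) = −(p² + q² − pq)(Q_p Q_q − Q_{p+q}). -/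
noncomputable section

open MvPolynomial

abbrev P2 := MvPolynomial (Fin 2) ℝ

def Gam (f g : P2) : P2 :=
  2*(X 1 - (X 0)^2) * (pderiv 0 f * pderiv 0 g)
  + (1 - X 0 * X 1) * (pderiv 0 f * pderiv 1 g + pderiv 1 f * pderiv 0 g)
  + 2*(X 0 - (X 1)^2) * (pderiv 1 f * pderiv 1 g)

lemma pderiv_ofNat' (i : Fin 2) (n : ℕ) [n.AtLeastTwo] :
    pderiv i (no_index (OfNat.ofNat n) : P2) = 0 := by
  simpa using Derivation.map_natCast (pderiv i) (OfNat.ofNat n : ℕ)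

lemma pd01 : pderiv 0 (X 1 : P2) = 0 := pderiv_X_of_ne (by decide)
lemma pd10 : pderiv 1 (X 0 : P2) = 0 := pderiv_X_of_ne (by decide)

lemma intWindow {Pr : ℤ → Prop} (h0 : Pr 0) (h1 : Pr 1) (h2 : Pr 2)
    (hf : ∀ p : ℤ, Pr p → Pr (p+1) → Pr (p+2) → Pr (p+3))
    (hb : ∀ p : ℤ, Pr p → Pr (p+1) → Pr (p+2) → Pr (p-1)) : ∀ p : ℤ, Pr p := by
  have main : ∀ n : ℕ, (Pr n ∧ Pr (n+1) ∧ Pr (n+2)) ∧ (Pr (-n) ∧ Pr (-n+1) ∧ Pr (-n+2)) := by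
    intro n
    induction n with
    | zero =>
      simp only [Nat.cast_zero, neg_zero, zero_add]
      exact ⟨⟨h0, h1, h2⟩, h0, h1, h2⟩
    | succ k ih =>
      obtain ⟨⟨a0, a1, a2⟩, b0, b1, b2⟩ := ih
      have e : ((k+1:ℕ):ℤ) = (k:ℤ)+1 := by push_cast; ring
      rw [e]
      have c3 : Pr ((k:ℤ)+3) := hf k a0 a1 a2
      have cm : Pr (-(k:ℤ)-1) := hb (-(k:ℤ)) b0 b1 b2
      refine ⟨⟨a1, ?_, ?_⟩, ?_, ?_, ?_⟩
      · rw [show (k:ℤ)+1+1 = (k:ℤ)+2 by ring]; exact a2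
      · rw [show (k:ℤ)+1+2 = (k:ℤ)+3 by ring]; exact c3
      · rw [show -((k:ℤ)+1) = -(k:ℤ)-1 by ring]; exact cm
      · rw [show -((k:ℤ)+1)+1 = -(k:ℤ) by ring]; exact b0
      · rw [show -((k:ℤ)+1)+2 = -(k:ℤ)+1 by ring]; exact b1
  intro p
  rcases Int.eq_nat_or_neg p with ⟨n, rfl | rfl⟩
  · exact (main n).1.1
  · exact (main n).2.1

lemma natWindow {Pr : ℕ → Prop} (h0 : Pr 0) (h1 : Pr 1) (h2 : Pr 2)
    (hf : ∀ n : ℕ, Pr n → Pr (n+1) → Pr (n+2) → Pr (n+3)) : ∀ n, Pr n := by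
  have main : ∀ n : ℕ, Pr n ∧ Pr (n+1) ∧ Pr (n+2) := by
    intro n
    induction n with
    | zero => exact ⟨h0, h1, h2⟩
    | succ k ih => exact ⟨ih.2.1, ih.2.2, hf k ih.1 ih.2.1 ih.2.2⟩
  exact fun n => (main n).1

lemma Lop_C_mul (c : ℝ) (f : P2) : Lop 1 (C c * f) = C c * Lop 1 f := by
  simp only [Lop, pderiv_C_mul]; ring

lemma C_num (n : ℕ) [n.AtLeastTwo] :
    (C (no_index (OfNat.ofNat n) : ℝ) : P2) = OfNat.ofNat n := map_ofNat _ _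

lemma deg_num (n : ℕ) [n.AtLeastTwo] :
    ((no_index (OfNat.ofNat n) : P2)).totalDegree = 0 := by
  rw [← C_num n]; exact totalDegree_C _

lemma deg3X' (i : Fin 2) : ((3:P2) * X i).totalDegree ≤ 1 := by
  refine le_trans (totalDegree_mul _ _) ?_
  rw [deg_num, totalDegree_X]

section Main

variable (T : ℤ → P2)
variable (hT0 : T 0 = 3) (hT1 : T 1 = 3 * X 0) (hT2 : T 2 = 9 * (X 0) ^ 2 - 6 * X 1)
variable (hrec : ∀ p : ℤ, T (p + 3) = 3 * X 0 * T (p + 2) - 3 * X 1 * T (p + 1) + T p)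

include hT0 hT1 hT2 hrec

lemma hTm1 : T (-1) = 3 * X 1 := by
  have h := hrec (-1)
  norm_num at h
  rw [hT0, hT1, hT2] at h
  linear_combination -h

lemma hTm2 : T (-2) = 9 * (X 1)^2 - 6 * X 0 := by
  have h := hrec (-2)
  norm_num at h
  rw [hT0, hT1, hTm1 T hT0 hT1 hT2 hrec] at h
  linear_combination -h

lemma ACD : ∀ p : ℤ,
    Lop 1 (T p) = C (-(p:ℝ)^2) * T p ∧
    Gam (X 0) (T p) = C ((p:ℝ)) * (X 0 * T p - T (p+1)) ∧
    Gam (X 1) (T p) = C ((p:ℝ)) * (T (p-1) - X 1 * T p) := by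
  have hm1 := hTm1 T hT0 hT1 hT2 hrec
  have hT2' : T 2 = 9 * (X 0 * X 0) - 6 * X 1 := by rw [hT2]; ring
  apply intWindow
  · -- p = 0
    norm_num
    rw [hT0]
    refine ⟨?_, ?_, ?_⟩ <;>
    · simp only [Lop, Gam, pderiv_mul, map_add, map_sub, map_neg, pderiv_X_self, pd01, pd10,
        pderiv_ofNat', pderiv_C, pderiv_one, map_one, map_zero]
      ring
  · -- p = 1
    norm_num
    rw [hT0, hT1, hT2']
    refine ⟨?_, ?_, ?_⟩ <;>
    · simp only [Lop, Gam, pderiv_mul, map_add, map_sub, map_neg, pderiv_X_self, pd01, pd10,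
        pderiv_ofNat', pderiv_C, pderiv_one, map_one, map_zero]
      ring
  · -- p = 2
    norm_num
    have e3 : T 3 = 3 * X 0 * T 2 - 3 * X 1 * T 1 + T 0 := by
      have h := hrec 0; norm_num at h; exact h
    rw [e3, hT0, hT1, hT2']
    refine ⟨?_, ?_, ?_⟩ <;>
    · simp only [Lop, Gam, pderiv_mul, map_add, map_sub, map_neg, pderiv_X_self, pd01, pd10,
        pderiv_ofNat', pderiv_C, pderiv_one, map_one, map_zero, map_ofNat]
      ring
  · -- forward step
    rintro p ⟨hA0, hC0, hD0⟩ ⟨hA1, hC1, hD1⟩ ⟨hA2, hC2, hD2⟩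
    have e3 : T (p+3) = 3 * X 0 * T (p+2) - 3 * X 1 * T (p+1) + T p := hrec p
    have e4 : T (p+4) = 3 * X 0 * T (p+3) - 3 * X 1 * T (p+2) + T (p+1) := by
      have h := hrec (p+1)
      rw [show p+1+3 = p+4 by ring, show p+1+2 = p+3 by ring, show p+1+1 = p+2 by ring] at h
      exact h
    have em1 : T (p-1) = T (p+2) - 3 * X 0 * T (p+1) + 3 * X 1 * T p := by
      have h := hrec (p-1)
      rw [show p-1+3 = p+2 by ring, show p-1+2 = p+1 by ring, show p-1+1 = p by ring] at h
      linear_combination -h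
    rw [show p+1+1 = p+2 by ring] at hC1
    rw [show p+2+1 = p+3 by ring, e3] at hC2
    rw [show p+1-1 = p by ring] at hD1
    rw [show p+2-1 = p+1 by ring] at hD2
    rw [em1] at hD0
    simp only [Lop, Gam, pderiv_mul, map_add, map_sub, map_neg, pderiv_X_self, pd01, pd10,
      pderiv_ofNat', pderiv_C, pderiv_one, map_one, map_zero] at hA0 hA1 hA2 hC0 hC1 hC2 hD0 hD1 hD2
    push_cast at hA0 hA1 hA2 hC0 hC1 hC2 hD0 hD1 hD2
    simp only [map_add, map_sub, map_neg, map_mul, map_pow, map_one, map_ofNat, map_zero]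
      at hA0 hA1 hA2 hC0 hC1 hC2 hD0 hD1 hD2
    refine ⟨?_, ?_, ?_⟩
    · -- A
      rw [e3]
      simp only [Lop, Gam, pderiv_mul, map_add, map_sub, map_neg, pderiv_X_self, pd01, pd10,
        pderiv_ofNat', pderiv_C, pderiv_one, map_one, map_zero]
      push_cast
      simp only [map_add, map_sub, map_neg, map_mul, map_pow, map_one, map_ofNat, map_zero]
      linear_combination (3*(X 0 : P2))*hA2 + 3*hC2 - (3*(X 1 : P2))*hA1 - 3*hD1 + hA0
    · -- C
      rw [show p+3+1 = p+4 by ring, e4, e3]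
      simp only [Lop, Gam, pderiv_mul, map_add, map_sub, map_neg, pderiv_X_self, pd01, pd10,
        pderiv_ofNat', pderiv_C, pderiv_one, map_one, map_zero]
      push_cast
      simp only [map_add, map_sub, map_neg, map_mul, map_pow, map_one, map_ofNat, map_zero]
      linear_combination (3*(X 0 : P2))*hC2 - (3*(X 1 : P2))*hC1 + hC0
    · -- D
      rw [show p+3-1 = p+2 by ring, e3]
      simp only [Lop, Gam, pderiv_mul, map_add, map_sub, map_neg, pderiv_X_self, pd01, pd10,
        pderiv_ofNat', pderiv_C, pderiv_one, map_one, map_zero]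
      push_cast
      simp only [map_add, map_sub, map_neg, map_mul, map_pow, map_one, map_ofNat, map_zero]
      linear_combination (3*(X 0 : P2))*hD2 - (3*(X 1 : P2))*hD1 + hD0
  · -- backward step
    rintro p ⟨hA0, hC0, hD0⟩ ⟨hA1, hC1, hD1⟩ ⟨hA2, hC2, hD2⟩
    have em1 : T (p-1) = T (p+2) - 3 * X 0 * T (p+1) + 3 * X 1 * T p := by
      have h := hrec (p-1)
      rw [show p-1+3 = p+2 by ring, show p-1+2 = p+1 by ring, show p-1+1 = p by ring] at h
      linear_combination -h
    have em2 : T (p-2) = T (p+1) - 3 * X 0 * T p + 3 * X 1 * T (p-1) := by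
      have h := hrec (p-2)
      rw [show p-2+3 = p+1 by ring, show p-2+2 = p by ring, show p-2+1 = p-1 by ring] at h
      linear_combination -h
    rw [em1] at em2
    rw [show p+1+1 = p+2 by ring] at hC1
    rw [show p+2+1 = p+3 by ring, hrec p] at hC2
    rw [show p+1-1 = p by ring] at hD1
    rw [show p+2-1 = p+1 by ring] at hD2
    rw [em1] at hD0
    simp only [Lop, Gam, pderiv_mul, map_add, map_sub, map_neg, pderiv_X_self, pd01, pd10,
      pderiv_ofNat', pderiv_C, pderiv_one, map_one, map_zero] at hA0 hA1 hA2 hC0 hC1 hC2 hD0 hD1 hD2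
    push_cast at hA0 hA1 hA2 hC0 hC1 hC2 hD0 hD1 hD2
    simp only [map_add, map_sub, map_neg, map_mul, map_pow, map_one, map_ofNat, map_zero]
      at hA0 hA1 hA2 hC0 hC1 hC2 hD0 hD1 hD2
    refine ⟨?_, ?_, ?_⟩
    · -- A
      rw [em1]
      simp only [Lop, Gam, pderiv_mul, map_add, map_sub, map_neg, pderiv_X_self, pd01, pd10,
        pderiv_ofNat', pderiv_C, pderiv_one, map_one, map_zero]
      push_cast
      simp only [map_add, map_sub, map_neg, map_mul, map_pow, map_one, map_ofNat, map_zero]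
      linear_combination hA2 - (3*(X 0 : P2))*hA1 - 3*hC1 + (3*(X 1 : P2))*hA0 + 3*hD0
    · -- C
      rw [show p-1+1 = p by ring, em1]
      simp only [Lop, Gam, pderiv_mul, map_add, map_sub, map_neg, pderiv_X_self, pd01, pd10,
        pderiv_ofNat', pderiv_C, pderiv_one, map_one, map_zero]
      push_cast
      simp only [map_add, map_sub, map_neg, map_mul, map_pow, map_one, map_ofNat, map_zero]
      linear_combination hC2 - (3*(X 0 : P2))*hC1 + (3*(X 1 : P2))*hC0
    · -- D
      rw [show p-1-1 = p-2 by ring, em2, em1]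
      simp only [Lop, Gam, pderiv_mul, map_add, map_sub, map_neg, pderiv_X_self, pd01, pd10,
        pderiv_ofNat', pderiv_C, pderiv_one, map_one, map_zero]
      push_cast
      simp only [map_add, map_sub, map_neg, map_mul, map_pow, map_one, map_ofNat, map_zero]
      linear_combination hD2 - (3*(X 0 : P2))*hD1 + (3*(X 1 : P2))*hD0

lemma Ebil : ∀ p q : ℤ,
    T (p+1) * T (q+2) + T (p-1) * T (q+1) - 3 * X 1 * (T p * T (q+1)) + T p * T q
      = 3 * X 0 * T (p+q+2) - 6 * X 1 * T (p+q+1) + 3 * T (p+q) := by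
  have hm1 := hTm1 T hT0 hT1 hT2 hrec
  apply intWindow (Pr := fun p => ∀ q : ℤ,
    T (p+1) * T (q+2) + T (p-1) * T (q+1) - 3 * X 1 * (T p * T (q+1)) + T p * T q
      = 3 * X 0 * T (p+q+2) - 6 * X 1 * T (p+q+1) + 3 * T (p+q))
  · -- p = 0
    intro q
    norm_num
    rw [hT0, hT1, hm1]
    ring
  · -- p = 1
    intro q
    rw [show (1:ℤ)+1 = 2 by norm_num, show (1:ℤ)-1 = 0 by norm_num,
      show (1:ℤ)+q+2 = q+3 by ring, show (1:ℤ)+q+1 = q+2 by ring, show (1:ℤ)+q = q+1 by ring,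
      hrec q, hT0, hT1, hT2]
    ring
  · -- p = 2
    intro q
    have e30 : T 3 = 3 * X 0 * T 2 - 3 * X 1 * T 1 + T 0 := by
      have h := hrec 0; norm_num at h; exact h
    rw [show (2:ℤ)+1 = 3 by norm_num, show (2:ℤ)-1 = 1 by norm_num,
      show (2:ℤ)+q+2 = (q+1)+3 by ring, hrec (q+1),
      show q+1+2 = q+3 by ring, show q+1+1 = q+2 by ring,
      show (2:ℤ)+q+1 = q+3 by ring, show (2:ℤ)+q = q+2 by ring,
      hrec q, e30, hT0, hT1, hT2]
    ring
  · -- forward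
    intro p h0 h1 h2 q
    have H0 := h0 q
    have H1 := h1 q
    have H2 := h2 q
    have e3 : T (p+3) = 3 * X 0 * T (p+2) - 3 * X 1 * T (p+1) + T p := hrec p
    have e4 : T (p+4) = 3 * X 0 * T (p+3) - 3 * X 1 * T (p+2) + T (p+1) := by
      have h := hrec (p+1)
      rw [show p+1+3 = p+4 by ring, show p+1+2 = p+3 by ring, show p+1+1 = p+2 by ring] at h
      exact h
    have em1 : T (p-1) = T (p+2) - 3 * X 0 * T (p+1) + 3 * X 1 * T p := by
      have h := hrec (p-1)
      rw [show p-1+3 = p+2 by ring, show p-1+2 = p+1 by ring, show p-1+1 = p by ring] at h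
      linear_combination -h
    rw [em1] at H0
    have epq3 : T (p+q+3) = 3 * X 0 * T (p+q+2) - 3 * X 1 * T (p+q+1) + T (p+q) := by
      have h := hrec (p+q); exact h
    have epq4 : T (p+q+4) = 3 * X 0 * T (p+q+3) - 3 * X 1 * T (p+q+2) + T (p+q+1) := by
      have h := hrec (p+q+1)
      rw [show p+q+1+3 = p+q+4 by ring, show p+q+1+2 = p+q+3 by ring,
        show p+q+1+1 = p+q+2 by ring] at h
      exact h
    have epq5 : T (p+q+5) = 3 * X 0 * T (p+q+4) - 3 * X 1 * T (p+q+3) + T (p+q+2) := by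
      have h := hrec (p+q+2)
      rw [show p+q+2+3 = p+q+5 by ring, show p+q+2+2 = p+q+4 by ring,
        show p+q+2+1 = p+q+3 by ring] at h
      exact h
    rw [show p+1+1 = p+2 by ring, show p+1-1 = p by ring,
      show p+1+q+2 = p+q+3 by ring, show p+1+q+1 = p+q+2 by ring,
      show p+1+q = p+q+1 by ring, epq3] at H1
    rw [show p+2+1 = p+3 by ring, show p+2-1 = p+1 by ring,
      show p+2+q+2 = p+q+4 by ring, show p+2+q+1 = p+q+3 by ring,
      show p+2+q = p+q+2 by ring, e3, epq4, epq3] at H2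
    rw [show p+3+1 = p+4 by ring, show p+3-1 = p+2 by ring,
      show p+3+q+2 = p+q+5 by ring, show p+3+q+1 = p+q+4 by ring,
      show p+3+q = p+q+3 by ring, epq5, epq4, epq3, e4, e3]
    linear_combination (3*(X 0 : P2))*H2 - (3*(X 1 : P2))*H1 + H0
  · -- backward
    intro p h0 h1 h2 q
    have H0 := h0 q
    have H1 := h1 q
    have H2 := h2 q
    have em1 : T (p-1) = T (p+2) - 3 * X 0 * T (p+1) + 3 * X 1 * T p := by
      have h := hrec (p-1)
      rw [show p-1+3 = p+2 by ring, show p-1+2 = p+1 by ring, show p-1+1 = p by ring] at h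
      linear_combination -h
    have em2 : T (p-2) = T (p+1) - 3 * X 0 * T p + 3 * X 1 * T (p-1) := by
      have h := hrec (p-2)
      rw [show p-2+3 = p+1 by ring, show p-2+2 = p by ring, show p-2+1 = p-1 by ring] at h
      linear_combination -h
    rw [em1] at em2
    have empq : T (p+q-1) = T (p+q+2) - 3 * X 0 * T (p+q+1) + 3 * X 1 * T (p+q) := by
      have h := hrec (p+q-1)
      rw [show p+q-1+3 = p+q+2 by ring, show p+q-1+2 = p+q+1 by ring,
        show p+q-1+1 = p+q by ring] at h
      linear_combination -h
    have epq3 : T (p+q+3) = 3 * X 0 * T (p+q+2) - 3 * X 1 * T (p+q+1) + T (p+q) := hrec (p+q)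
    have epq4 : T (p+q+4) = 3 * X 0 * T (p+q+3) - 3 * X 1 * T (p+q+2) + T (p+q+1) := by
      have h := hrec (p+q+1)
      rw [show p+q+1+3 = p+q+4 by ring, show p+q+1+2 = p+q+3 by ring,
        show p+q+1+1 = p+q+2 by ring] at h
      exact h
    rw [em1] at H0
    rw [show p+1+1 = p+2 by ring, show p+1-1 = p by ring,
      show p+1+q+2 = p+q+3 by ring, show p+1+q+1 = p+q+2 by ring,
      show p+1+q = p+q+1 by ring, epq3] at H1
    rw [show p+2+1 = p+3 by ring, show p+2-1 = p+1 by ring,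
      show p+2+q+2 = p+q+4 by ring, show p+2+q+1 = p+q+3 by ring,
      show p+2+q = p+q+2 by ring, hrec p, epq4, epq3] at H2
    rw [show p-1+1 = p by ring, show p-1-1 = p-2 by ring,
      show p-1+q+2 = p+q+1 by ring, show p-1+q+1 = p+q by ring,
      show p-1+q = p+q-1 by ring, em2, em1, empq]
    linear_combination H2 - (3*(X 0 : P2))*H1 + (3*(X 1 : P2))*H0

lemma Bbil : ∀ q p : ℤ,
    Gam (T p) (T q) = C ((p:ℝ)*(q:ℝ)) * (T p * T q - 3 * T (p+q)) := by
  have hACD := ACD T hT0 hT1 hT2 hrec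
  have hE := Ebil T hT0 hT1 hT2 hrec
  have hT2' : T 2 = 9 * (X 0 * X 0) - 6 * X 1 := by rw [hT2]; ring
  apply intWindow (Pr := fun q => ∀ p : ℤ,
    Gam (T p) (T q) = C ((p:ℝ)*(q:ℝ)) * (T p * T q - 3 * T (p+q)))
  · -- q = 0
    intro p
    rw [hT0, add_zero]
    simp only [Gam, pderiv_mul, map_add, map_sub, map_neg, pderiv_X_self, pd01, pd10,
      pderiv_ofNat', pderiv_C, pderiv_one, map_one, map_zero]
    push_cast
    simp only [mul_zero, map_zero]
    ring
  · -- q = 1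
    intro p
    have hC := (hACD p).2.1
    rw [hT1]
    simp only [Gam, pderiv_mul, map_add, map_sub, map_neg, pderiv_X_self, pd01, pd10,
      pderiv_ofNat', pderiv_C, pderiv_one, map_one, map_zero] at hC ⊢
    push_cast at hC ⊢
    simp only [mul_one, map_zero] at hC ⊢
    linear_combination 3*hC
  · -- q = 2
    intro p
    have hC := (hACD p).2.1
    have hD := (hACD p).2.2
    rw [hT2', show p+2 = p-1+3 by ring, hrec (p-1),
      show p-1+2 = p+1 by ring, show p-1+1 = p by ring]
    simp only [Gam, pderiv_mul, map_add, map_sub, map_neg, pderiv_X_self, pd01, pd10,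
      pderiv_ofNat', pderiv_C, pderiv_one, map_one, map_zero] at hC hD ⊢
    push_cast at hC hD ⊢
    simp only [map_add, map_sub, map_neg, map_mul, map_pow, map_one, map_ofNat, map_zero]
      at hC hD ⊢
    linear_combination (18*(X 0 : P2))*hC - 6*hD
  · -- forward
    intro q h0 h1 h2 p
    have H0 := h0 p
    have H1 := h1 p
    have H2 := h2 p
    have hC := (hACD p).2.1
    have hD := (hACD p).2.2
    have hEpq := hE p q
    have epq3 : T (p+q+3) = 3 * X 0 * T (p+q+2) - 3 * X 1 * T (p+q+1) + T (p+q) := hrec (p+q)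
    rw [show p+(q+1) = p+q+1 by ring] at H1
    rw [show p+(q+2) = p+q+2 by ring] at H2
    rw [show p+(q+3) = p+q+3 by ring, epq3, hrec q]
    simp only [Gam, pderiv_mul, map_add, map_sub, map_neg, pderiv_X_self, pd01, pd10,
      pderiv_ofNat', pderiv_C, pderiv_one, map_one, map_zero] at H0 H1 H2 hC hD ⊢
    push_cast at H0 H1 H2 hC hD hEpq ⊢
    simp only [map_add, map_sub, map_neg, map_mul, map_pow, map_one, map_ofNat, map_zero]
      at H0 H1 H2 hC hD hEpq ⊢
    linear_combination (3*(X 0 : P2))*H2 + (3*(T (q+2)))*hC - (3*(X 1 : P2))*H1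
      - (3*(T (q+1)))*hD + H0 - (3*(C ((p:ℝ)) : P2))*hEpq
  · -- backward
    intro q h0 h1 h2 p
    have H0 := h0 p
    have H1 := h1 p
    have H2 := h2 p
    have hC := (hACD p).2.1
    have hD := (hACD p).2.2
    have emq : T (q-1) = T (q+2) - 3 * X 0 * T (q+1) + 3 * X 1 * T q := by
      have h := hrec (q-1)
      rw [show q-1+3 = q+2 by ring, show q-1+2 = q+1 by ring, show q-1+1 = q by ring] at h
      linear_combination -h
    have empq : T (p+q-1) = T (p+q+2) - 3 * X 0 * T (p+q+1) + 3 * X 1 * T (p+q) := by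
      have h := hrec (p+q-1)
      rw [show p+q-1+3 = p+q+2 by ring, show p+q-1+2 = p+q+1 by ring,
        show p+q-1+1 = p+q by ring] at h
      linear_combination -h
    have hEpq := hE p (q-1)
    rw [show q-1+2 = q+1 by ring, show q-1+1 = q by ring,
      show p+(q-1)+2 = p+q+1 by ring, show p+(q-1)+1 = p+q by ring,
      show p+(q-1) = p+q-1 by ring, emq, empq] at hEpq
    rw [show p+(q+1) = p+q+1 by ring] at H1
    rw [show p+(q+2) = p+q+2 by ring] at H2
    rw [show p+(q-1) = p+q-1 by ring, empq, emq]
    simp only [Gam, pderiv_mul, map_add, map_sub, map_neg, pderiv_X_self, pd01, pd10,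
      pderiv_ofNat', pderiv_C, pderiv_one, map_one, map_zero] at H0 H1 H2 hC hD ⊢
    push_cast at H0 H1 H2 hC hD hEpq ⊢
    simp only [map_add, map_sub, map_neg, map_mul, map_pow, map_one, map_ofNat, map_zero]
      at H0 H1 H2 hC hD hEpq ⊢
    linear_combination H2 - (3*(X 0 : P2))*H1 - (3*(T (q+1)))*hC
      + (3*(X 1 : P2))*H0 + (3*(T q))*hD + (3*(C ((p:ℝ)) : P2))*hEpq

lemma eig (a b : ℤ) :
    Lop 1 (T a * T b - T (a+b))
      = C (-(((a:ℝ))^2 - (a:ℝ)*(b:ℝ) + (b:ℝ)^2)) * (T a * T b - T (a+b)) := by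
  have hAa := (ACD T hT0 hT1 hT2 hrec a).1
  have hAb := (ACD T hT0 hT1 hT2 hrec b).1
  have hAab := (ACD T hT0 hT1 hT2 hrec (a+b)).1
  have hB := Bbil T hT0 hT1 hT2 hrec b a
  simp only [Lop, Gam, pderiv_mul, map_add, map_sub, map_neg, pderiv_X_self, pd01, pd10,
    pderiv_ofNat', pderiv_C, pderiv_one, map_one, map_zero] at hAa hAb hAab hB ⊢
  push_cast at hAa hAb hAab hB ⊢
  simp only [map_add, map_sub, map_neg, map_mul, map_pow, map_one, map_ofNat, map_zero]
    at hAa hAb hAab hB ⊢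
  linear_combination (T b)*hAa + (T a)*hAb + hB - hAab

lemma Tdegpos : ∀ n : ℕ, (T (n:ℤ)).totalDegree ≤ n ∧
    (1 ≤ n → ∃ E : P2, T (n:ℤ) = C ((3:ℝ)^n) * X 0 ^ n + E ∧ E.totalDegree < n) := by
  apply natWindow
  · constructor
    · rw [Nat.cast_zero, hT0]
      exact le_of_eq (deg_num 3)
    · intro h; exact absurd h (by norm_num)
  · constructor
    · rw [Nat.cast_one, hT1]
      exact deg3X' 0
    · intro _
      refine ⟨0, ?_, by simp⟩
      rw [Nat.cast_one, hT1]
      norm_num [C_num]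
  · constructor
    · rw [show ((2:ℕ):ℤ) = 2 by norm_num, hT2]
      refine le_trans (totalDegree_sub _ _) (max_le ?_ ?_)
      · refine le_trans (totalDegree_mul _ _) ?_
        rw [deg_num, totalDegree_X_pow]
      · refine le_trans (totalDegree_mul _ _) ?_
        rw [deg_num, totalDegree_X]
        omega
    · intro _
      refine ⟨-(6*X 1), ?_, ?_⟩
      · rw [show ((2:ℕ):ℤ) = 2 by norm_num, hT2]
        norm_num [map_ofNat]
        ring
      · rw [totalDegree_neg]
        refine lt_of_le_of_lt (le_trans (totalDegree_mul _ _) ?_) (show 1 < 2 by norm_num)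
        rw [deg_num, totalDegree_X]
  · intro n ih0 ih1 ih2
    have c1 : ((n+1:ℕ):ℤ) = (n:ℤ)+1 := by push_cast; ring
    have c2 : ((n+2:ℕ):ℤ) = (n:ℤ)+2 := by push_cast; ring
    have c3 : ((n+3:ℕ):ℤ) = (n:ℤ)+3 := by push_cast; ring
    rw [c1] at ih1
    rw [c2] at ih2
    obtain ⟨E2, hd, hdeg⟩ := ih2.2 (by omega)
    have er : T ((n:ℤ)+3) = 3 * X 0 * T ((n:ℤ)+2) - 3 * X 1 * T ((n:ℤ)+1) + T (n:ℤ) := hrec n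
    rw [c3]
    have b2 : (3 * X 0 * T ((n:ℤ)+2)).totalDegree ≤ n+3 :=
      le_trans (totalDegree_mul _ _) (le_trans (add_le_add (deg3X' 0) ih2.1) (by omega))
    have b1 : (3 * X 1 * T ((n:ℤ)+1)).totalDegree ≤ n+2 :=
      le_trans (totalDegree_mul _ _) (le_trans (add_le_add (deg3X' 1) ih1.1) (by omega))
    constructor
    · rw [er]
      refine le_trans (totalDegree_add _ _) (max_le (le_trans (totalDegree_sub _ _)
        (max_le b2 (le_trans b1 (by omega)))) (le_trans ih0.1 (by omega)))
    · intro _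
      have hc : (C ((3:ℝ)^(n+3)) : P2) = 3 * C ((3:ℝ)^(n+2)) := by
        rw [show (3:ℝ)^(n+3) = 3^(n+2)*3 by ring, map_mul, map_ofNat]; ring
      refine ⟨3 * X 0 * E2 - 3 * X 1 * T ((n:ℤ)+1) + T (n:ℤ), ?_, ?_⟩
      · rw [er, hd]
        linear_combination (-(X 0:P2)^(n+3))*hc
      · have bE : (3 * X 0 * E2).totalDegree ≤ n+2 :=
          le_trans (totalDegree_mul _ _) (le_trans (add_le_add (deg3X' 0) (show E2.totalDegree ≤ n+1 by omega)) (by omega))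
        refine lt_of_le_of_lt ?_ (show n+2 < n+3 by omega)
        refine le_trans (totalDegree_add _ _) (max_le (le_trans (totalDegree_sub _ _)
          (max_le bE b1)) (le_trans ih0.1 (by omega)))

lemma Tdegneg : ∀ n : ℕ, (T (-(n:ℤ))).totalDegree ≤ n ∧
    (1 ≤ n → ∃ E : P2, T (-(n:ℤ)) = C ((3:ℝ)^n) * X 1 ^ n + E ∧ E.totalDegree < n) := by
  have hm1 := hTm1 T hT0 hT1 hT2 hrec
  have hm2 := hTm2 T hT0 hT1 hT2 hrec
  apply natWindow
  · constructor
    · rw [Nat.cast_zero, neg_zero, hT0]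
      exact le_of_eq (deg_num 3)
    · intro h; exact absurd h (by norm_num)
  · constructor
    · rw [Nat.cast_one, hm1]
      exact deg3X' 1
    · intro _
      refine ⟨0, ?_, by simp⟩
      rw [Nat.cast_one, hm1]
      norm_num [C_num]
  · constructor
    · rw [show (-((2:ℕ):ℤ)) = -2 by norm_num, hm2]
      refine le_trans (totalDegree_sub _ _) (max_le ?_ ?_)
      · refine le_trans (totalDegree_mul _ _) ?_
        rw [deg_num, totalDegree_X_pow]
      · refine le_trans (totalDegree_mul _ _) ?_
        rw [deg_num, totalDegree_X]
        omega
    · intro _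
      refine ⟨-(6*X 0), ?_, ?_⟩
      · rw [show (-((2:ℕ):ℤ)) = -2 by norm_num, hm2]
        norm_num [map_ofNat]
        ring
      · rw [totalDegree_neg]
        refine lt_of_le_of_lt (le_trans (totalDegree_mul _ _) ?_) (show 1 < 2 by norm_num)
        rw [deg_num, totalDegree_X]
  · intro n ih0 ih1 ih2
    have c1 : (-((n+1:ℕ):ℤ)) = -(n:ℤ)-1 := by push_cast; ring
    have c2 : (-((n+2:ℕ):ℤ)) = -(n:ℤ)-2 := by push_cast; ring
    have c3 : (-((n+3:ℕ):ℤ)) = -(n:ℤ)-3 := by push_cast; ring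
    rw [c1] at ih1
    rw [c2] at ih2
    obtain ⟨E2, hd, hdeg⟩ := ih2.2 (by omega)
    have er : T (-(n:ℤ)-3) = T (-(n:ℤ)) - 3 * X 0 * T (-(n:ℤ)-1) + 3 * X 1 * T (-(n:ℤ)-2) := by
      have h := hrec (-(n:ℤ)-3)
      rw [show -(n:ℤ)-3+3 = -(n:ℤ) by ring, show -(n:ℤ)-3+2 = -(n:ℤ)-1 by ring,
        show -(n:ℤ)-3+1 = -(n:ℤ)-2 by ring] at h
      linear_combination -h
    rw [c3]
    have b2 : (3 * X 1 * T (-(n:ℤ)-2)).totalDegree ≤ n+3 :=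
      le_trans (totalDegree_mul _ _) (le_trans (add_le_add (deg3X' 1) ih2.1) (by omega))
    have b1 : (3 * X 0 * T (-(n:ℤ)-1)).totalDegree ≤ n+2 :=
      le_trans (totalDegree_mul _ _) (le_trans (add_le_add (deg3X' 0) ih1.1) (by omega))
    constructor
    · rw [er]
      refine le_trans (totalDegree_add _ _) (max_le (le_trans (totalDegree_sub _ _)
        (max_le (le_trans ih0.1 (by omega)) (le_trans b1 (by omega)))) b2)
    · intro _
      have hc : (C ((3:ℝ)^(n+3)) : P2) = 3 * C ((3:ℝ)^(n+2)) := by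
        rw [show (3:ℝ)^(n+3) = 3^(n+2)*3 by ring, map_mul, map_ofNat]; ring
      refine ⟨T (-(n:ℤ)) - 3 * X 0 * T (-(n:ℤ)-1) + 3 * X 1 * E2, ?_, ?_⟩
      · rw [er, hd]
        linear_combination (-(X 1:P2)^(n+3))*hc
      · have bE : (3 * X 1 * E2).totalDegree ≤ n+2 :=
          le_trans (totalDegree_mul _ _) (le_trans (add_le_add (deg3X' 1) (show E2.totalDegree ≤ n+1 by omega)) (by omega))
        refine lt_of_le_of_lt ?_ (show n+2 < n+3 by omega)
        refine le_trans (totalDegree_add _ _) (max_le (le_trans (totalDegree_sub _ _)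
          (max_le (le_trans ih0.1 (by omega)) b1)) bE)

end Main

theorem stmt_10 (T : ℤ → MvPolynomial (Fin 2) ℝ)
    (hT0 : T 0 = 3) (hT1 : T 1 = 3 * X 0) (hT2 : T 2 = 9 * (X 0) ^ 2 - 6 * X 1)
    (hrec : ∀ p : ℤ, T (p + 3) = 3 * X 0 * T (p + 2) - 3 * X 1 * T (p + 1) + T p)
    (Q : ℤ → MvPolynomial (Fin 2) ℝ)
    (hQ : ∀ p : ℤ, Q p = C ((3 : ℝ) ^ (-|p|)) * T p) :
    (∀ p q : ℤ, 1 ≤ p → 1 ≤ q →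
      Lop 1 (Q p * Q (-q) - C ((3 : ℝ) ^ (-(2 * min p q))) * Q (p - q))
        = C (-(((p : ℝ)) ^ 2 + (q : ℝ) ^ 2 + (p : ℝ) * q)) *
            (Q p * Q (-q) - C ((3 : ℝ) ^ (-(2 * min p q))) * Q (p - q)) ∧
      ∃ R : MvPolynomial (Fin 2) ℝ,
        Q p * Q (-q) - C ((3 : ℝ) ^ (-(2 * min p q))) * Q (p - q)
          = X 0 ^ p.toNat * X 1 ^ q.toNat + R ∧
        (R = 0 ∨ R.totalDegree < p.toNat + q.toNat)) ∧
    (∀ p q : ℤ, 0 ≤ q → q ≤ p →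
      Lop 1 (Q p * Q q - Q (p + q))
        = C (-(((p : ℝ)) ^ 2 + (q : ℝ) ^ 2 - (p : ℝ) * q)) * (Q p * Q q - Q (p + q))) := by
  have h3 : (3:ℝ) ≠ 0 := by norm_num
  constructor
  · intro p q hp hq
    have habsp : |p| = p := abs_of_nonneg (by omega)
    have habsq : |(-q)| = q := by rw [abs_neg]; exact abs_of_nonneg (by omega)
    have hmin : -(2 * min p q) + -|p - q| = -(p+q) := by
      rcases le_total p q with h | h
      · rw [min_eq_left h, abs_of_nonpos (by omega)]; ring
      · rw [min_eq_right h, abs_of_nonneg (by omega)]; ring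
    have k1 : (C ((3:ℝ)^(-p)) : P2) * C ((3:ℝ)^(-q)) = C ((3:ℝ)^(-(p+q))) := by
      rw [← map_mul, ← zpow_add₀ h3, show -p + -q = -(p+q) by ring]
    have k2 : (C ((3:ℝ)^(-(2 * min p q))) : P2) * C ((3:ℝ)^(-|p-q|)) = C ((3:ℝ)^(-(p+q))) := by
      rw [← map_mul, ← zpow_add₀ h3, hmin]
    have hdecomp : Q p * Q (-q) - C ((3:ℝ)^(-(2 * min p q))) * Q (p-q)
        = C ((3:ℝ)^(-(p+q))) * (T p * T (-q) - T (p-q)) := by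
      rw [hQ p, hQ (-q), hQ (p-q), habsp, habsq]
      linear_combination (T p * T (-q)) * k1 - (T (p-q)) * k2
    constructor
    · rw [hdecomp, Lop_C_mul]
      have he := eig T hT0 hT1 hT2 hrec p (-q)
      rw [show p + -q = p - q by ring] at he
      rw [he]
      push_cast
      simp only [map_add, map_sub, map_neg, map_mul, map_pow, map_one, map_ofNat, map_zero]
      ring
    · have hpa : ((p.toNat : ℕ) : ℤ) = p := Int.toNat_of_nonneg (by omega)
      have hqb : ((q.toNat : ℕ) : ℤ) = q := Int.toNat_of_nonneg (by omega)
      obtain ⟨E1, h1, hd1⟩ := (Tdegpos T hT0 hT1 hT2 hrec p.toNat).2 (by omega)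
      obtain ⟨E2, h2, hd2⟩ := (Tdegneg T hT0 hT1 hT2 hrec q.toNat).2 (by omega)
      rw [hpa] at h1
      have h2' : T (-q) = C ((3:ℝ)^q.toNat) * X 1 ^ q.toNat + E2 := by rw [← hqb]; exact h2
      have hone : (C ((3:ℝ)^(-(p+q))) : P2) * (C ((3:ℝ)^p.toNat) * C ((3:ℝ)^q.toNat)) = 1 := by
        rw [← map_mul, ← map_mul, ← zpow_natCast (3:ℝ) p.toNat, ← zpow_natCast (3:ℝ) q.toNat,
          ← zpow_add₀ h3, ← zpow_add₀ h3, hpa, hqb, show -(p+q)+(p+q) = 0 by ring, zpow_zero,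
          map_one]
      refine ⟨C ((3:ℝ)^(-(p+q))) * (C ((3:ℝ)^p.toNat) * X 0 ^ p.toNat * E2
        + E1 * (C ((3:ℝ)^q.toNat) * X 1 ^ q.toNat) + E1 * E2 - T (p-q)), ?_, Or.inr ?_⟩
      · rw [hdecomp, h1, h2']
        linear_combination ((X 0 : P2) ^ p.toNat * X 1 ^ q.toNat) * hone
      · have hT3 : (T (p-q)).totalDegree ≤ p.toNat + q.toNat - 1 := by
          rcases le_total q p with h | h
          · have hc : p - q = ((p.toNat - q.toNat : ℕ) : ℤ) := by omega
            rw [hc]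
            exact le_trans (Tdegpos T hT0 hT1 hT2 hrec (p.toNat - q.toNat)).1 (by omega)
          · have hc : p - q = -(((q.toNat - p.toNat : ℕ)) : ℤ) := by omega
            rw [hc]
            exact le_trans (Tdegneg T hT0 hT1 hT2 hrec (q.toNat - p.toNat)).1 (by omega)
        have hx0 : (C ((3:ℝ)^p.toNat) * X 0 ^ p.toNat : P2).totalDegree ≤ p.toNat :=
          le_trans (totalDegree_mul _ _) (by rw [totalDegree_C, totalDegree_X_pow]; omega)
        have hx1 : (C ((3:ℝ)^q.toNat) * X 1 ^ q.toNat : P2).totalDegree ≤ q.toNat :=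
          le_trans (totalDegree_mul _ _) (by rw [totalDegree_C, totalDegree_X_pow]; omega)
        have t1 : (C ((3:ℝ)^p.toNat) * X 0 ^ p.toNat * E2).totalDegree
            ≤ p.toNat + q.toNat - 1 := by
          refine le_trans (totalDegree_mul _ _) ?_
          omega
        have t2 : (E1 * (C ((3:ℝ)^q.toNat) * X 1 ^ q.toNat)).totalDegree
            ≤ p.toNat + q.toNat - 1 := by
          refine le_trans (totalDegree_mul _ _) ?_
          omega
        have t3 : (E1 * E2).totalDegree ≤ p.toNat + q.toNat - 1 := by
          refine le_trans (totalDegree_mul _ _) ?_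
          omega
        have hS : (C ((3:ℝ)^p.toNat) * X 0 ^ p.toNat * E2
            + E1 * (C ((3:ℝ)^q.toNat) * X 1 ^ q.toNat) + E1 * E2 - T (p-q)).totalDegree
            ≤ p.toNat + q.toNat - 1 := by
          refine le_trans (totalDegree_sub _ _) (max_le (le_trans (totalDegree_add _ _)
            (max_le (le_trans (totalDegree_add _ _) (max_le t1 t2)) t3)) hT3)
        refine lt_of_le_of_lt (le_trans (totalDegree_mul _ _) ?_)
          (show p.toNat + q.toNat - 1 < p.toNat + q.toNat by omega)
        rw [totalDegree_C]
        omega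
  · intro p q hq hpq
    have habsp : |p| = p := abs_of_nonneg (by omega)
    have habsq : |q| = q := abs_of_nonneg (by omega)
    have habspq : |p+q| = p+q := abs_of_nonneg (by omega)
    have k1 : (C ((3:ℝ)^(-p)) : P2) * C ((3:ℝ)^(-q)) = C ((3:ℝ)^(-(p+q))) := by
      rw [← map_mul, ← zpow_add₀ h3, show -p + -q = -(p+q) by ring]
    have hdecomp : Q p * Q q - Q (p+q) = C ((3:ℝ)^(-(p+q))) * (T p * T q - T (p+q)) := by
      rw [hQ p, hQ q, hQ (p+q), habsp, habsq, habspq]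
      linear_combination (T p * T q) * k1
    rw [hdecomp, Lop_C_mul, eig T hT0 hT1 hT2 hrec p q]
    push_cast
    simp only [map_add, map_sub, map_neg, map_mul, map_pow, map_one, map_ofNat, map_zero]
    ring
end
end

section
/- Let z₁, z₂, z₃ ∈ ℂ with |z₁| = |z₂| = |z₃| = 1 and z₁z₂z₃ = 1; for p ∈ ℤ set T_p = z₁^p + z₂^p + z₃^p. Define the polynomials P̄(X) = (1 − Xz₁)(1 − Xz₂)(1 − Xz₃) and P(Y) = (1 − Y·conj(z₁))(1 − Y·conj(z₂))(1 − Y·conj(z₃)). Then for all complex X, Y with |X| < 1 and |Y| < 1, the family (X^p Y^q (T_p T_{−q} − T_{p−q}))_{(p,q) ∈ ℕ×ℕ} is absolutely summable and Σ_{(p,q)∈ℕ²} X^p Y^q (T_p T_{−q} − T_{p−q}) = (3 − X·P̄′(X)/P̄(X)) · (3 − Y·P′(Y)/P(Y)) + (1/(1 − XY)) · ( X·P̄′(X)/P̄(X) + Y·P′(Y)/P(Y) − 3 ), where ′ denotes the complex derivative. -/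
lemma geo2_norm_summable (a b : ℂ) (ha : ‖a‖ < 1) (hb : ‖b‖ < 1) :
    Summable (fun pq : ℕ × ℕ => ‖a ^ pq.1 * b ^ pq.2‖) := by
  have h : (fun pq : ℕ × ℕ => ‖a ^ pq.1 * b ^ pq.2‖)
      = fun pq : ℕ × ℕ => ‖a‖ ^ pq.1 * ‖b‖ ^ pq.2 := by
    funext pq; simp [norm_mul, norm_pow]
  rw [h]
  exact (summable_geometric_of_lt_one (norm_nonneg a) ha).mul_of_nonneg
    (summable_geometric_of_lt_one (norm_nonneg b) hb)
    (fun n => pow_nonneg (norm_nonneg a) n) (fun n => pow_nonneg (norm_nonneg b) n)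

lemma geo2_summable (a b : ℂ) (ha : ‖a‖ < 1) (hb : ‖b‖ < 1) :
    Summable (fun pq : ℕ × ℕ => a ^ pq.1 * b ^ pq.2) :=
  (geo2_norm_summable a b ha hb).of_norm

lemma geo2_tsum (a b : ℂ) (ha : ‖a‖ < 1) (hb : ‖b‖ < 1) :
    ∑' pq : ℕ × ℕ, a ^ pq.1 * b ^ pq.2 = (1 - a)⁻¹ * (1 - b)⁻¹ := by
  rw [Summable.tsum_prod (geo2_summable a b ha hb)]
  simp_rw [tsum_mul_left, tsum_geometric_of_norm_lt_one hb, tsum_mul_right,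
    tsum_geometric_of_norm_lt_one ha]

lemma geo2_hasSum (a b : ℂ) (ha : ‖a‖ < 1) (hb : ‖b‖ < 1) :
    HasSum (fun pq : ℕ × ℕ => a ^ pq.1 * b ^ pq.2) ((1 - a)⁻¹ * (1 - b)⁻¹) :=
  (geo2_tsum a b ha hb) ▸ (geo2_summable a b ha hb).hasSum

lemma norm_add6_le (a b c d e f : ℂ) :
    ‖a + b + c + d + e + f‖ ≤ ‖a‖ + ‖b‖ + ‖c‖ + ‖d‖ + ‖e‖ + ‖f‖ := by
  refine (norm_add_le _ _).trans (add_le_add ?_ le_rfl)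
  refine (norm_add_le _ _).trans (add_le_add ?_ le_rfl)
  refine (norm_add_le _ _).trans (add_le_add ?_ le_rfl)
  refine (norm_add_le _ _).trans (add_le_add ?_ le_rfl)
  exact norm_add_le _ _

lemma one_sub_ne (w : ℂ) (h : ‖w‖ < 1) : (1 : ℂ) - w ≠ 0 := by
  intro h0
  rw [sub_eq_zero] at h0
  rw [← h0] at h
  simp at h

lemma sumA (X z₁ z₂ z₃ : ℂ) (hA1 : (1:ℂ) - X * z₁ ≠ 0) (hA2 : (1:ℂ) - X * z₂ ≠ 0)
    (hA3 : (1:ℂ) - X * z₃ ≠ 0) :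
    X * ((-z₁ * (1 - X * z₂) + (1 - X * z₁) * -z₂) * (1 - X * z₃)
        + (1 - X * z₁) * (1 - X * z₂) * -z₃)
      / ((1 - X * z₁) * (1 - X * z₂) * (1 - X * z₃))
    = 3 - ((1 - X * z₁)⁻¹ + (1 - X * z₂)⁻¹ + (1 - X * z₃)⁻¹) := by
  field_simp
  ring

lemma diag (X Y z : ℂ) (hz : z ≠ 0) (hXY : (1:ℂ) - X * Y ≠ 0)
    (hA : (1:ℂ) - X * z ≠ 0) (hB : (1:ℂ) - Y * z⁻¹ ≠ 0) :
    (1 - X * z)⁻¹ * (1 - Y * z⁻¹)⁻¹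
      = (1 - X * Y)⁻¹ * ((1 - X * z)⁻¹ + (1 - Y * z⁻¹)⁻¹ - 1) := by
  have hzY : z - Y ≠ 0 := by
    intro h0
    apply hB
    rw [sub_eq_zero] at h0
    rw [← h0, mul_inv_cancel₀ hz, sub_self]
  field_simp
  ring

lemma final_alg (a1 a2 a3 b1 b2 b3 c : ℂ)
    (d1 : a1 * b1 = c * (a1 + b1 - 1)) (d2 : a2 * b2 = c * (a2 + b2 - 1))
    (d3 : a3 * b3 = c * (a3 + b3 - 1)) :
    a1 * b2 + a1 * b3 + a2 * b1 + a2 * b3 + a3 * b1 + a3 * b2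
      = (3 - (3 - (a1 + a2 + a3))) * (3 - (3 - (b1 + b2 + b3)))
        + c * ((3 - (a1 + a2 + a3)) + (3 - (b1 + b2 + b3)) - 3) := by
  linear_combination (-1 : ℂ) * d1 - d2 - d3

set_option maxHeartbeats 1000000 in
theorem stmt_18 (z₁ z₂ z₃ : ℂ)
    (h1 : ‖z₁‖ = 1) (h2 : ‖z₂‖ = 1) (h3 : ‖z₃‖ = 1)
    (hprod : z₁ * z₂ * z₃ = 1)
    (T : ℤ → ℂ) (hT : ∀ p : ℤ, T p = z₁ ^ p + z₂ ^ p + z₃ ^ p)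
    (Pb P : ℂ → ℂ)
    (hPb : ∀ X : ℂ, Pb X = (1 - X * z₁) * (1 - X * z₂) * (1 - X * z₃))
    (hP : ∀ Y : ℂ, P Y = (1 - Y * starRingEnd ℂ z₁) * (1 - Y * starRingEnd ℂ z₂) *
      (1 - Y * starRingEnd ℂ z₃)) :
    ∀ X Y : ℂ, ‖X‖ < 1 → ‖Y‖ < 1 →
      Summable (fun pq : ℕ × ℕ =>
        ‖X ^ pq.1 * Y ^ pq.2 *
          (T pq.1 * T (-(pq.2 : ℤ)) - T ((pq.1 : ℤ) - (pq.2 : ℤ)))‖) ∧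
      ∑' pq : ℕ × ℕ, X ^ pq.1 * Y ^ pq.2 *
          (T pq.1 * T (-(pq.2 : ℤ)) - T ((pq.1 : ℤ) - (pq.2 : ℤ)))
        = (3 - X * deriv Pb X / Pb X) * (3 - Y * deriv P Y / P Y)
          + (1 / (1 - X * Y)) * (X * deriv Pb X / Pb X + Y * deriv P Y / P Y - 3) := by
  intro X Y hX hY
  have hz1 : z₁ ≠ 0 := by intro h; rw [h] at h1; simp at h1
  have hz2 : z₂ ≠ 0 := by intro h; rw [h] at h2; simp at h2
  have hz3 : z₃ ≠ 0 := by intro h; rw [h] at h3; simp at h3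
  have hc1 : starRingEnd ℂ z₁ = z₁⁻¹ := (Complex.inv_eq_conj h1).symm
  have hc2 : starRingEnd ℂ z₂ = z₂⁻¹ := (Complex.inv_eq_conj h2).symm
  have hc3 : starRingEnd ℂ z₃ = z₃⁻¹ := (Complex.inv_eq_conj h3).symm
  have hXn : ‖X‖ < 1 := hX
  have hYn : ‖Y‖ < 1 := hY
  have hnX : ∀ z : ℂ, ‖z‖ = 1 → ‖X * z‖ < 1 := by
    intro z hz
    rw [norm_mul]
    simpa [hz] using hXn
  have hnY : ∀ z : ℂ, ‖z‖ = 1 → ‖Y * z⁻¹‖ < 1 := by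
    intro z hz
    rw [norm_mul, norm_inv]
    simpa [hz] using hYn
  have hFp : ∀ pq : ℕ × ℕ, X ^ pq.1 * Y ^ pq.2 *
      (T pq.1 * T (-(pq.2 : ℤ)) - T ((pq.1 : ℤ) - (pq.2 : ℤ)))
      = (X * z₁) ^ pq.1 * (Y * z₂⁻¹) ^ pq.2 + (X * z₁) ^ pq.1 * (Y * z₃⁻¹) ^ pq.2
        + (X * z₂) ^ pq.1 * (Y * z₁⁻¹) ^ pq.2 + (X * z₂) ^ pq.1 * (Y * z₃⁻¹) ^ pq.2
        + (X * z₃) ^ pq.1 * (Y * z₁⁻¹) ^ pq.2 + (X * z₃) ^ pq.1 * (Y * z₂⁻¹) ^ pq.2 := by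
    rintro ⟨p, q⟩
    simp only [hT, zpow_sub₀ hz1, zpow_sub₀ hz2, zpow_sub₀ hz3, zpow_neg, zpow_natCast,
      div_eq_mul_inv, inv_pow, mul_pow]
    ring
  constructor
  · simp only [hFp]
    refine Summable.of_nonneg_of_le (fun _ => norm_nonneg _)
      (fun pq => norm_add6_le _ _ _ _ _ _) ?_
    exact (((((geo2_norm_summable _ _ (hnX _ h1) (hnY _ h2)).add
      (geo2_norm_summable _ _ (hnX _ h1) (hnY _ h3))).add
      (geo2_norm_summable _ _ (hnX _ h2) (hnY _ h1))).add
      (geo2_norm_summable _ _ (hnX _ h2) (hnY _ h3))).add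
      (geo2_norm_summable _ _ (hnX _ h3) (hnY _ h1))).add
      (geo2_norm_summable _ _ (hnX _ h3) (hnY _ h2))
  · have H12 := geo2_hasSum (X * z₁) (Y * z₂⁻¹) (hnX _ h1) (hnY _ h2)
    have H13 := geo2_hasSum (X * z₁) (Y * z₃⁻¹) (hnX _ h1) (hnY _ h3)
    have H21 := geo2_hasSum (X * z₂) (Y * z₁⁻¹) (hnX _ h2) (hnY _ h1)
    have H23 := geo2_hasSum (X * z₂) (Y * z₃⁻¹) (hnX _ h2) (hnY _ h3)
    have H31 := geo2_hasSum (X * z₃) (Y * z₁⁻¹) (hnX _ h3) (hnY _ h1)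
    have H32 := geo2_hasSum (X * z₃) (Y * z₂⁻¹) (hnX _ h3) (hnY _ h2)
    have Hsum := ((((H12.add H13).add H21).add H23).add H31).add H32
    simp only [hFp]
    rw [Hsum.tsum_eq]
    have e1 : HasDerivAt (fun x : ℂ => 1 - x * z₁) (-z₁) X := by
      simpa using ((hasDerivAt_id X).mul_const z₁).const_sub 1
    have e2 : HasDerivAt (fun x : ℂ => 1 - x * z₂) (-z₂) X := by
      simpa using ((hasDerivAt_id X).mul_const z₂).const_sub 1
    have e3 : HasDerivAt (fun x : ℂ => 1 - x * z₃) (-z₃) X := by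
      simpa using ((hasDerivAt_id X).mul_const z₃).const_sub 1
    have f1 : HasDerivAt (fun y : ℂ => 1 - y * z₁⁻¹) (-z₁⁻¹) Y := by
      simpa using ((hasDerivAt_id Y).mul_const z₁⁻¹).const_sub 1
    have f2 : HasDerivAt (fun y : ℂ => 1 - y * z₂⁻¹) (-z₂⁻¹) Y := by
      simpa using ((hasDerivAt_id Y).mul_const z₂⁻¹).const_sub 1
    have f3 : HasDerivAt (fun y : ℂ => 1 - y * z₃⁻¹) (-z₃⁻¹) Y := by
      simpa using ((hasDerivAt_id Y).mul_const z₃⁻¹).const_sub 1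
    have hPbfun : Pb = fun x : ℂ => (1 - x * z₁) * (1 - x * z₂) * (1 - x * z₃) :=
      funext hPb
    have hPfun : P = fun y : ℂ => (1 - y * z₁⁻¹) * (1 - y * z₂⁻¹) * (1 - y * z₃⁻¹) := by
      funext y; rw [hP y, hc1, hc2, hc3]
    have hDPb : deriv Pb X = (-z₁ * (1 - X * z₂) + (1 - X * z₁) * -z₂) * (1 - X * z₃)
        + (1 - X * z₁) * (1 - X * z₂) * -z₃ := by
      rw [hPbfun]; exact ((e1.mul e2).mul e3).deriv
    have hDP : deriv P Y = (-z₁⁻¹ * (1 - Y * z₂⁻¹) + (1 - Y * z₁⁻¹) * -z₂⁻¹) * (1 - Y * z₃⁻¹)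
        + (1 - Y * z₁⁻¹) * (1 - Y * z₂⁻¹) * -z₃⁻¹ := by
      rw [hPfun]; exact ((f1.mul f2).mul f3).deriv
    have hA1 : (1 : ℂ) - X * z₁ ≠ 0 := one_sub_ne _ (hnX _ h1)
    have hA2 : (1 : ℂ) - X * z₂ ≠ 0 := one_sub_ne _ (hnX _ h2)
    have hA3 : (1 : ℂ) - X * z₃ ≠ 0 := one_sub_ne _ (hnX _ h3)
    have hB1 : (1 : ℂ) - Y * z₁⁻¹ ≠ 0 := one_sub_ne _ (hnY _ h1)
    have hB2 : (1 : ℂ) - Y * z₂⁻¹ ≠ 0 := one_sub_ne _ (hnY _ h2)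
    have hB3 : (1 : ℂ) - Y * z₃⁻¹ ≠ 0 := one_sub_ne _ (hnY _ h3)
    have hXY : (1 : ℂ) - X * Y ≠ 0 := by
      refine one_sub_ne _ ?_
      rw [norm_mul]
      calc ‖X‖ * ‖Y‖ ≤ 1 * ‖Y‖ := mul_le_mul_of_nonneg_right hXn.le (norm_nonneg _)
        _ = ‖Y‖ := one_mul _
        _ < 1 := hYn
    have eA : X * deriv Pb X / Pb X
        = 3 - ((1 - X * z₁)⁻¹ + (1 - X * z₂)⁻¹ + (1 - X * z₃)⁻¹) := by
      rw [hDPb, hPb X]; exact sumA X z₁ z₂ z₃ hA1 hA2 hA3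
    have eB : Y * deriv P Y / P Y
        = 3 - ((1 - Y * z₁⁻¹)⁻¹ + (1 - Y * z₂⁻¹)⁻¹ + (1 - Y * z₃⁻¹)⁻¹) := by
      rw [hDP, hP Y, hc1, hc2, hc3]; exact sumA Y z₁⁻¹ z₂⁻¹ z₃⁻¹ hB1 hB2 hB3
    rw [eA, eB]
    have d1 := diag X Y z₁ hz1 hXY hA1 hB1
    have d2 := diag X Y z₂ hz2 hXY hA2 hB2
    have d3 := diag X Y z₃ hz3 hXY hA3 hB3
    rw [one_div]
    exact final_alg _ _ _ _ _ _ _ d1 d2 d3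
end
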